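/- arXiv:1711.00814 — 10 statements merged into one kernel-verified Lean document; each statement's English description precedes it below -/
import Mathlib

section
/- Let d be a positive integer, let η = (η_1,…,η_d) be a probability distribution over [d], and let α ≥ 1 and 0 ≤ β ≤ α be real numbers. Then M_{α+β}(η) ≤ d^{(α−1)(α−β)/α} · M_α(η)^2, and M_{α−β}(η) ≤ d^β · M_α(η). -/
open Finset in
private lemma sum_rpow_le_rpow_sum' {d : ℕ} (f : Fin d → ℝ) (hf : ∀ i, 0 ≤ f i)
    {s : ℝ} (hs : 1 ≤ s) : ∑ i, f i ^ s ≤ (∑ i, f i) ^ s := by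
  have hsum : 0 ≤ ∑ i, f i := Finset.sum_nonneg fun i _ => hf i
  have hs0 : s ≠ 0 := by linarith
  calc ∑ i, f i ^ s = ∑ i, f i ^ (s - 1) * f i := by
        refine Finset.sum_congr rfl fun i _ => ?_
        have h : f i ^ s = f i ^ (s - 1 + 1) := by norm_num
        rw [h, Real.rpow_add' (hf i) (by simp [hs0]), Real.rpow_one]
    _ ≤ ∑ i, (∑ j, f j) ^ (s - 1) * f i := by
        refine Finset.sum_le_sum fun i _ => ?_
        refine mul_le_mul_of_nonneg_right ?_ (hf i)
        exact Real.rpow_le_rpow (hf i) (Finset.single_le_sum (fun j _ => hf j) (mem_univ i))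
          (by linarith)
    _ = (∑ i, f i) ^ (s - 1) * ∑ i, f i := by rw [← Finset.mul_sum]
    _ = (∑ i, f i) ^ s := by
        have h : (∑ i, f i) ^ s = (∑ i, f i) ^ (s - 1 + 1) := by norm_num
        rw [h, Real.rpow_add' hsum (by simp [hs0]), Real.rpow_one]

private lemma sum_rpow_le_card_mul' {d : ℕ} (f : Fin d → ℝ) (hf : ∀ i, 0 ≤ f i)
    {r : ℝ} (hr0 : 0 ≤ r) (hr1 : r ≤ 1) :
    ∑ i, f i ^ r ≤ (d : ℝ) ^ (1 - r) * (∑ i, f i) ^ r := by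
  rcases eq_or_lt_of_le hr0 with h0 | h0
  · simp [← h0, Real.rpow_natCast]
  have hsum : 0 ≤ ∑ i, f i := Finset.sum_nonneg fun i _ => hf i
  have hd : (0:ℝ) ≤ d := Nat.cast_nonneg d
  -- apply the known inequality to g = f ^ r with exponent 1/r ≥ 1
  have key := Real.rpow_sum_le_const_mul_sum_rpow_of_nonneg (Finset.univ : Finset (Fin d))
    (f := fun i => f i ^ r) (by rw [le_div_iff₀ h0]; linarith : (1:ℝ) ≤ 1/r)
    (fun i _ => Real.rpow_nonneg (hf i) r)
  have hpow : ∀ i, (f i ^ r) ^ (1/r) = f i := by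
    intro i
    rw [← Real.rpow_mul (hf i), mul_one_div, div_self h0.ne', Real.rpow_one]
  simp only [hpow, Finset.card_univ, Fintype.card_fin] at key
  -- key : (∑ i, f i ^ r) ^ (1/r) ≤ d ^ (1/r - 1) * ∑ i, f i
  have hLnn : 0 ≤ ∑ i, f i ^ r := Finset.sum_nonneg fun i _ => Real.rpow_nonneg (hf i) r
  have := Real.rpow_le_rpow (Real.rpow_nonneg hLnn _) key hr0
  rwa [← Real.rpow_mul hLnn, one_div_mul_cancel h0.ne', Real.rpow_one,
    Real.mul_rpow (Real.rpow_nonneg hd _) hsum, ← Real.rpow_mul hd,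
    show (1/r - 1) * r = 1 - r by field_simp] at this

/-- For a probability distribution `η` over `[d]` and reals `α ≥ 1`, `0 ≤ β ≤ α`,
we have `M_{α+β}(η) ≤ d^((α-1)(α-β)/α) · M_α(η)^2` and `M_{α-β}(η) ≤ d^β · M_α(η)`. -/
theorem powerSum_bounds_of_one_le (d : ℕ) (hd : 0 < d) (η : Fin d → ℝ)
    (hnn : ∀ i, 0 ≤ η i) (hsum : ∑ i, η i = 1)
    (α β : ℝ) (hα : 1 ≤ α) (hβ0 : 0 ≤ β) (hβα : β ≤ α) :
    ∑ i, η i ^ (α + β) ≤ (d : ℝ) ^ ((α - 1) * (α - β) / α) * (∑ i, η i ^ α) ^ 2 ∧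
    ∑ i, η i ^ (α - β) ≤ (d : ℝ) ^ β * (∑ i, η i ^ α) := by
  have hα0 : (0:ℝ) < α := by linarith
  have hd1 : (1:ℝ) ≤ d := by exact_mod_cast hd
  have hd0 : (0:ℝ) ≤ d := by linarith
  set S : ℝ := ∑ i, η i ^ α with hS
  have hSnn : 0 ≤ S := Finset.sum_nonneg fun i _ => Real.rpow_nonneg (hnn i) α
  -- lower bound on S
  have hSlow : (d : ℝ) ^ (1 - α) ≤ S := by
    have key := Real.rpow_sum_le_const_mul_sum_rpow_of_nonneg (Finset.univ : Finset (Fin d))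
      (f := η) hα (fun i _ => hnn i)
    rw [hsum, Real.one_rpow, Finset.card_univ, Fintype.card_fin] at key
    -- key : 1 ≤ d ^ (α - 1) * S
    have h2 := mul_le_mul_of_nonneg_left key (Real.rpow_nonneg hd0 (1 - α))
    rw [mul_one, ← mul_assoc, ← Real.rpow_add (by linarith : (0:ℝ) < d), show
      (1 - α) + (α - 1) = 0 by ring, Real.rpow_zero, one_mul] at h2
    exact h2
  have hSpos : 0 < S := lt_of_lt_of_le (Real.rpow_pos_of_pos (by linarith) _) hSlow
  have hr0 : 0 ≤ (α - β) / α := div_nonneg (by linarith) hα0.le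
  have hr1 : (α - β) / α ≤ 1 := by
    rw [div_le_one hα0]; linarith
  -- rewrite η^(α ∓ β) through (η^α)
  have hrw1 : ∀ i, η i ^ (α + β) = (η i ^ α) ^ ((α + β)/α) := by
    intro i; rw [← Real.rpow_mul (hnn i), mul_div_cancel₀ _ hα0.ne']
  have hrw2 : ∀ i, η i ^ (α - β) = (η i ^ α) ^ ((α - β)/α) := by
    intro i; rw [← Real.rpow_mul (hnn i), mul_div_cancel₀ _ hα0.ne']
  -- S^((α-β)/α) lower bound
  have hSr : (d : ℝ) ^ ((1 - α) * ((α - β)/α)) ≤ S ^ ((α - β)/α) := by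
    rw [Real.rpow_mul hd0]
    exact Real.rpow_le_rpow (Real.rpow_nonneg hd0 _) hSlow hr0
  constructor
  · -- first inequality
    have hs1 : (1:ℝ) ≤ (α + β)/α := by rw [le_div_iff₀ hα0]; linarith
    have step1 : ∑ i, η i ^ (α + β) ≤ S ^ ((α + β)/α) := by
      simp only [hrw1]
      exact sum_rpow_le_rpow_sum' (fun i => η i ^ α)
        (fun i => Real.rpow_nonneg (hnn i) α) hs1
    have one_le : (1:ℝ) ≤ (d : ℝ) ^ ((α - 1) * (α - β) / α) * S ^ ((α - β)/α) := by
      calc (1:ℝ) = (d:ℝ) ^ ((α - 1) * (α - β) / α + (1 - α) * ((α - β)/α)) := by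
            rw [show (α - 1) * (α - β) / α + (1 - α) * ((α - β)/α) = 0 by ring,
              Real.rpow_zero]
        _ = (d:ℝ) ^ ((α - 1) * (α - β) / α) * (d:ℝ) ^ ((1 - α) * ((α - β)/α)) :=
            Real.rpow_add (by linarith) _ _
        _ ≤ _ := mul_le_mul_of_nonneg_left hSr (Real.rpow_nonneg hd0 _)
    calc ∑ i, η i ^ (α + β) ≤ S ^ ((α + β)/α) := step1
      _ = 1 * S ^ ((α + β)/α) := (one_mul _).symm
      _ ≤ ((d : ℝ) ^ ((α - 1) * (α - β) / α) * S ^ ((α - β)/α)) * S ^ ((α + β)/α) :=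
          mul_le_mul_of_nonneg_right one_le (Real.rpow_nonneg hSnn _)
      _ = (d : ℝ) ^ ((α - 1) * (α - β) / α) * S ^ 2 := by
          rw [mul_assoc, ← Real.rpow_add hSpos, show (α - β)/α + (α + β)/α = 2 by
            field_simp; ring, Real.rpow_two]
  · -- second inequality
    have step1 : ∑ i, η i ^ (α - β) ≤ (d : ℝ) ^ (1 - (α - β)/α) * S ^ ((α - β)/α) := by
      simp only [hrw2]
      exact sum_rpow_le_card_mul' (fun i => η i ^ α)
        (fun i => Real.rpow_nonneg (hnn i) α) hr0 hr1
    refine step1.trans ?_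
    -- d^(1-r) * S^r ≤ d^β * S ;  S = S^r * S^(1-r), S^(1-r) ≥ d^((1-α)(1-r))
    have h1r : 0 ≤ 1 - (α - β)/α := by linarith
    have hS1r : (d : ℝ) ^ ((1 - α) * (1 - (α - β)/α)) ≤ S ^ (1 - (α - β)/α) := by
      rw [Real.rpow_mul hd0]
      exact Real.rpow_le_rpow (Real.rpow_nonneg hd0 _) hSlow h1r
    have hdle : (d : ℝ) ^ (1 - (α - β)/α) ≤ (d : ℝ) ^ β * (d:ℝ) ^ ((1 - α) * (1 - (α - β)/α)) := by
      rw [← Real.rpow_add (by linarith : (0:ℝ) < d)]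
      refine Real.rpow_le_rpow_of_exponent_le hd1 ?_
      have : 1 - (α - β)/α = β / α := by field_simp; ring
      rw [this]
      have h2 : β + (1 - α) * (β / α) = β / α := by field_simp; ring
      rw [h2]
    calc (d : ℝ) ^ (1 - (α - β)/α) * S ^ ((α - β)/α)
        ≤ ((d : ℝ) ^ β * (d:ℝ) ^ ((1 - α) * (1 - (α - β)/α))) * S ^ ((α - β)/α) :=
          mul_le_mul_of_nonneg_right hdle (Real.rpow_nonneg hSnn _)
      _ ≤ ((d : ℝ) ^ β * S ^ (1 - (α - β)/α)) * S ^ ((α - β)/α) := by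
          refine mul_le_mul_of_nonneg_right ?_ (Real.rpow_nonneg hSnn _)
          exact mul_le_mul_of_nonneg_left hS1r (Real.rpow_nonneg hd0 _)
      _ = (d : ℝ) ^ β * S := by
          rw [mul_assoc, ← Real.rpow_add hSpos, show 1 - (α - β)/α + (α - β)/α = 1 by ring,
            Real.rpow_one]
end

section
/- Let α ≥ 2 and 0 ≤ j ≤ α−1 be integers. Let σ_1 be a permutation of {1,…,α+j} that acts as a single cycle on the set {1,…,α} and fixes every element of {α+1,…,α+j}, and let σ_2 be a permutation of {1,…,α+j} that acts as a single cycle on the set {j+1,…,j+α} and fixes every element of {1,…,j}. Then every orbit of the composition σ_1 ∘ σ_2 on {1,…,α+j} contains an element of {j+1,…,α}; consequently, the number of orbits of the cyclic group generated by σ_1 ∘ σ_2 acting on {1,…,α+j} (equivalently, the number of cycles, counting fixed points as cycles of length one) is at most α − j. -/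
/-- Let `α ≥ 2` and `0 ≤ j ≤ α-1`. If `σ₁` is a permutation of `{0,…,α+j-1}` acting as a
single cycle on `{0,…,α-1}` and fixing the rest, and `σ₂` acts as a single cycle on
`{j,…,α+j-1}` and fixes the rest, then every orbit of `σ₁ ∘ σ₂` contains an element of
`{j,…,α-1}`, and hence the number of orbits (cycles, counting fixed points) is at most
`α - j`. (This is the 0-based version of the statement about `{1,…,α+j}`.) -/
theorem cycles_of_comp_le (α j : ℕ) (hα : 2 ≤ α) (hj : j ≤ α - 1)
    (σ₁ σ₂ : Equiv.Perm (Fin (α + j)))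
    (h₁c : σ₁.IsCycleOn {x : Fin (α + j) | (x : ℕ) < α})
    (h₁f : ∀ x : Fin (α + j), α ≤ (x : ℕ) → σ₁ x = x)
    (h₂c : σ₂.IsCycleOn {x : Fin (α + j) | j ≤ (x : ℕ)})
    (h₂f : ∀ x : Fin (α + j), (x : ℕ) < j → σ₂ x = x) :
    (∀ x : Fin (α + j), ∃ n : ℕ,
        j ≤ ((((σ₁ * σ₂) ^ n) x : Fin (α + j)) : ℕ) ∧
        ((((σ₁ * σ₂) ^ n) x : Fin (α + j)) : ℕ) < α) ∧
    Nat.card (Quotient (MulAction.orbitRel (Subgroup.zpowers (σ₁ * σ₂)) (Fin (α + j)))) ≤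
      α - j := by
  have hjα : j < α := lt_of_le_of_lt hj (by omega)
  have hjlt : j < α + j := by omega
  set π : Equiv.Perm (Fin (α + j)) := σ₁ * σ₂ with hπ
  have hm1 : ∀ y : Fin (α + j), (y : ℕ) < α → (σ₁ y : ℕ) < α := fun y hy =>
    h₁c.1.mapsTo hy
  have hm2 : ∀ y : Fin (α + j), j ≤ (y : ℕ) → j ≤ (σ₂ y : ℕ) := fun y hy =>
    h₂c.1.mapsTo hy
  -- case x < α
  have hA : ∀ x : Fin (α + j), (x : ℕ) < α →
      ∃ n : ℕ, j ≤ ((π ^ n) x : ℕ) ∧ ((π ^ n) x : ℕ) < α := by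
    intro x hx
    have hsame : σ₁.SameCycle x ⟨j, hjlt⟩ := h₁c.2 hx hjα
    obtain ⟨m, -, hm⟩ := hsame.exists_pow_eq'
    have hex : ∃ n : ℕ, j ≤ ((σ₁ ^ n) x : ℕ) := ⟨m, by rw [hm]⟩
    classical
    set n := Nat.find hex with hn
    have hnj : j ≤ ((σ₁ ^ n) x : ℕ) := Nat.find_spec hex
    have hmin : ∀ k < n, ((σ₁ ^ k) x : ℕ) < j := fun k hk => by
      have := Nat.find_min hex hk; omega
    have hσ1lt : ∀ k : ℕ, ((σ₁ ^ k) x : ℕ) < α := by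
      intro k
      induction k with
      | zero => simpa using hx
      | succ k ih => rw [pow_succ', Equiv.Perm.mul_apply]; exact hm1 _ ih
    have hkey : ∀ k ≤ n, (π ^ k) x = (σ₁ ^ k) x := by
      intro k hk
      induction k with
      | zero => simp
      | succ k ih =>
        have hk' : k < n := by omega
        rw [pow_succ', Equiv.Perm.mul_apply, ih (le_of_lt hk'), hπ,
          Equiv.Perm.mul_apply, h₂f _ (hmin k hk'), ← Equiv.Perm.mul_apply, ← pow_succ']
    refine ⟨n, ?_, ?_⟩
    · rw [hkey n le_rfl]; exact hnj
    · rw [hkey n le_rfl]; exact hσ1lt n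
  have hkeyall : ∀ x : Fin (α + j), ∃ n : ℕ,
      j ≤ ((π ^ n) x : ℕ) ∧ ((π ^ n) x : ℕ) < α := by
    intro x
    by_cases hx : (x : ℕ) < α
    · exact hA x hx
    · -- x ≥ α
      push_neg at hx
      have hxj : j ≤ (x : ℕ) := le_trans (le_of_lt hjα) hx
      have hsame : σ₂.SameCycle x ⟨j, hjlt⟩ := h₂c.2 hxj (by simp)
      obtain ⟨m, -, hm⟩ := hsame.exists_pow_eq'
      have hex : ∃ n : ℕ, ((σ₂ ^ n) x : ℕ) < α := ⟨m, by rw [hm]; exact hjα⟩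
      classical
      obtain ⟨n, hnlt, hmin⟩ : ∃ n : ℕ, ((σ₂ ^ n) x : ℕ) < α ∧
          ∀ k < n, α ≤ ((σ₂ ^ k) x : ℕ) :=
        ⟨Nat.find hex, Nat.find_spec hex, fun k hk => by
          have := Nat.find_min hex hk; omega⟩
      have hnpos : 0 < n := by
        rcases Nat.eq_zero_or_pos n with h0 | h0
        · exfalso; rw [h0] at hnlt; simp at hnlt; omega
        · exact h0
      have hkey : ∀ k < n, (π ^ k) x = (σ₂ ^ k) x := by
        intro k hk
        induction k with
        | zero => simp
        | succ k ih =>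
          have hk' : k < n := by omega
          rw [pow_succ', Equiv.Perm.mul_apply, ih hk', hπ, Equiv.Perm.mul_apply,
            ← Equiv.Perm.mul_apply σ₂, ← pow_succ']
          exact h₁f _ (hmin _ hk)
      have hstep : ((π ^ n) x : ℕ) < α := by
        obtain ⟨n', rfl⟩ : ∃ n', n = n' + 1 := ⟨n - 1, by omega⟩
        rw [pow_succ', Equiv.Perm.mul_apply, hkey n' (by omega), hπ,
          Equiv.Perm.mul_apply, ← Equiv.Perm.mul_apply σ₂, ← pow_succ']
        exact hm1 _ hnlt
      obtain ⟨k, hk1, hk2⟩ := hA ((π ^ n) x) hstep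
      refine ⟨k + n, ?_, ?_⟩ <;> rw [pow_add, Equiv.Perm.mul_apply]
      · exact hk1
      · exact hk2
  refine ⟨hkeyall, ?_⟩
  -- counting: surjection from Fin (α - j)
  have hsurj : Function.Surjective
      (fun i : Fin (α - j) =>
        (Quotient.mk (MulAction.orbitRel (Subgroup.zpowers π) (Fin (α + j)))
          ⟨j + (i : ℕ), by omega⟩)) := by
    intro q
    obtain ⟨x, rfl⟩ := Quotient.exists_rep q
    obtain ⟨n, hn1, hn2⟩ := hkeyall x
    refine ⟨⟨((π ^ n) x : ℕ) - j, by omega⟩, ?_⟩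
    apply Quotient.sound
    have hmem : j + (((π ^ n) x : ℕ) - j) = ((π ^ n) x : ℕ) := by omega
    have heq : (⟨j + (((π ^ n) x : ℕ) - j), by omega⟩ : Fin (α + j)) = (π ^ n) x := by
      apply Fin.ext; simp [hmem]
    rw [heq]
    exact ⟨⟨π ^ n, Subgroup.zpow_mem _ (Subgroup.mem_zpowers π) n⟩, rfl⟩
  calc Nat.card (Quotient (MulAction.orbitRel (Subgroup.zpowers π) (Fin (α + j))))
      ≤ Nat.card (Fin (α - j)) := Nat.card_le_card_of_surjective _ hsurj
    _ = α - j := by simp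
end

section
/- Let d and ℓ be positive integers and let η = (η_1,…,η_d) be a probability distribution over [d]. Let x = (x_1 ≥ x_2 ≥ ⋯ ≥ x_ℓ) and y = (y_1 ≥ y_2 ≥ ⋯ ≥ y_ℓ) be nonincreasing tuples of positive integers with Σ_{i=1}^ℓ x_i = Σ_{i=1}^ℓ y_i and such that x majorizes y, i.e., Σ_{i=1}^k x_i ≥ Σ_{i=1}^k y_i for every k ∈ {1,…,ℓ}. Then ∏_{i=1}^ℓ M_{x_i}(η) ≥ ∏_{i=1}^ℓ M_{y_i}(η). -/
lemma keyIneq0 {d : ℕ} (η : Fin d → ℝ) (hnn : ∀ i, 0 ≤ η i) (p c : ℕ) :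
    (∑ t, η t ^ (p + c)) * (∑ t, η t ^ (p + 1)) ≤ (∑ t, η t ^ (p + c + 1)) * (∑ t, η t ^ p) := by
  have h0 : 0 ≤ ∑ i, ∑ j, (η i * η j) ^ p * ((η i ^ c - η j ^ c) * (η i - η j)) := by
    apply Finset.sum_nonneg; intro i _
    apply Finset.sum_nonneg; intro j _
    have hp : (0:ℝ) ≤ (η i * η j) ^ p := pow_nonneg (mul_nonneg (hnn i) (hnn j)) p
    rcases le_total (η i) (η j) with h | h
    · have h1 : η i ^ c ≤ η j ^ c := pow_le_pow_left₀ (hnn i) h c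
      have := mul_nonneg hp (mul_nonneg (sub_nonneg.2 h1) (sub_nonneg.2 h))
      nlinarith [this]
    · exact mul_nonneg hp (mul_nonneg
        (sub_nonneg.2 (pow_le_pow_left₀ (hnn j) h c)) (sub_nonneg.2 h))
  have aux : ∀ e1 e2 : ℕ, (∑ i, ∑ j, η i ^ e1 * η j ^ e2)
      = (∑ t, η t ^ e1) * (∑ t, η t ^ e2) := fun e1 e2 => (Finset.sum_mul_sum _ _ _ _).symm
  have hexp : (∑ i, ∑ j, (η i * η j) ^ p * ((η i ^ c - η j ^ c) * (η i - η j)))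
      = ((∑ t, η t ^ (p+c+1)) * (∑ t, η t ^ p) + (∑ t, η t ^ p) * (∑ t, η t ^ (p+c+1)))
        - ((∑ t, η t ^ (p+c)) * (∑ t, η t ^ (p+1)) + (∑ t, η t ^ (p+1)) * (∑ t, η t ^ (p+c))) := by
    rw [← aux, ← aux, ← aux, ← aux]
    rw [← Finset.sum_add_distrib, ← Finset.sum_add_distrib, ← Finset.sum_sub_distrib]
    refine Finset.sum_congr rfl fun i _ => ?_
    rw [← Finset.sum_add_distrib, ← Finset.sum_add_distrib, ← Finset.sum_sub_distrib]
    refine Finset.sum_congr rfl fun j _ => ?_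
    ring
  nlinarith [h0, hexp]

lemma keyIneq {d : ℕ} (η : Fin d → ℝ) (hnn : ∀ i, 0 ≤ η i) (a b : ℕ) (hb : 1 ≤ b) (hba : b ≤ a) :
    (∑ t, η t ^ a) * (∑ t, η t ^ b) ≤ (∑ t, η t ^ (a + 1)) * (∑ t, η t ^ (b - 1)) := by
  obtain ⟨p, rfl⟩ : ∃ p, b = p + 1 := ⟨b - 1, by omega⟩
  obtain ⟨c, rfl⟩ : ∃ c, a = p + c := ⟨a - p, by omega⟩
  simpa using keyIneq0 η hnn p c


lemma lemA {ℓ : ℕ} (f : Fin ℓ → ℕ) (i : Fin ℓ) :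
    (∑ t ∈ Finset.univ.filter (· ≤ i), f t)
      = (∑ t ∈ Finset.univ.filter (· < i), f t) + f i := by
  have h : Finset.univ.filter (· ≤ i) = insert i (Finset.univ.filter (· < i)) := by
    ext t
    simp only [Finset.mem_filter, Finset.mem_insert, Finset.mem_univ, true_and]
    constructor
    · intro h; rcases lt_or_eq_of_le h with h | h
      · exact Or.inr h
      · exact Or.inl h
    · rintro (rfl | h)
      · exact le_rfl
      · exact h.le
  rw [h, Finset.sum_insert (by simp)]
  omega

lemma lemSucc {ℓ : ℕ} (f : Fin ℓ → ℕ) (i : Fin ℓ) (h : i.val + 1 < ℓ) :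
    (∑ t ∈ Finset.univ.filter (· ≤ (⟨i.val + 1, h⟩ : Fin ℓ)), f t)
      = (∑ t ∈ Finset.univ.filter (· ≤ i), f t) + f ⟨i.val + 1, h⟩ := by
  have heq : Finset.univ.filter (· ≤ (⟨i.val + 1, h⟩ : Fin ℓ))
      = insert (⟨i.val + 1, h⟩ : Fin ℓ) (Finset.univ.filter (· ≤ i)) := by
    ext t
    simp only [Finset.mem_filter, Finset.mem_insert, Finset.mem_univ, true_and,
      Fin.le_def, Fin.ext_iff]
    omega
  rw [heq, Finset.sum_insert (by
    simp only [Finset.mem_filter, Finset.mem_univ, true_and, Fin.le_def]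
    omega)]
  omega

lemma partial_sum_eq {ℓ : ℕ} (x y : Fin ℓ → ℕ) (P : Fin ℓ → Prop)
    (hdc : ∀ a b : Fin ℓ, a ≤ b → P b → P a)
    (hS : ∀ i, P i → (∑ t ∈ Finset.univ.filter (· ≤ i), x t)
      = ∑ t ∈ Finset.univ.filter (· ≤ i), y t) :
    ∀ i, P i → x i = y i := by
  suffices H : ∀ n : ℕ, ∀ i : Fin ℓ, i.val ≤ n → P i → x i = y i from
    fun i => H i.val i le_rfl
  intro n
  induction n using Nat.strong_induction_on with
  | _ n IH =>
    intro i hin hP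
    have hpre : (∑ t ∈ Finset.univ.filter (· < i), x t)
        = ∑ t ∈ Finset.univ.filter (· < i), y t := by
      refine Finset.sum_congr rfl fun t ht => ?_
      have htl : t < i := (Finset.mem_filter.mp ht).2
      have htv : t.val < i.val := htl
      exact IH t.val (by omega) t le_rfl (hdc t i htl.le hP)
    have h1 := hS i hP
    rw [lemA, lemA] at h1
    omega

lemma auxMain {d ℓ : ℕ} (hℓ : 0 < ℓ) (η : Fin d → ℝ) (hnn : ∀ i, 0 ≤ η i)
    (x : Fin ℓ → ℕ) (hx : Antitone x) (hxpos : ∀ i, 0 < x i) :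
    ∀ n : ℕ, ∀ y : Fin ℓ → ℕ, Antitone y → (∀ i, 0 < y i) →
      (∑ i, x i = ∑ i, y i) →
      (∀ k : Fin ℓ, (∑ i ∈ Finset.univ.filter (· ≤ k), y i)
        ≤ ∑ i ∈ Finset.univ.filter (· ≤ k), x i) →
      ((∑ k, ∑ i ∈ Finset.univ.filter (· ≤ k), x i)
        ≤ (∑ k, ∑ i ∈ Finset.univ.filter (· ≤ k), y i) + n) →
      ∏ i, (∑ t, η t ^ (y i)) ≤ ∏ i, (∑ t, η t ^ (x i)) := by
  classical
  intro n
  induction n with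
  | zero =>
    intro y hy hypos hsumeq hmaj hbound
    have hsums : (∑ k, ∑ i ∈ Finset.univ.filter (· ≤ k), y i)
        = ∑ k, ∑ i ∈ Finset.univ.filter (· ≤ k), x i :=
      le_antisymm (Finset.sum_le_sum fun k _ => hmaj k) (by simpa using hbound)
    have hall := (Finset.sum_eq_sum_iff_of_le (fun k (_ : k ∈ Finset.univ) => hmaj k)).mp hsums
    have heq : ∀ i : Fin ℓ, x i = y i :=
      fun i => partial_sum_eq x y (fun _ => True) (fun _ _ _ _ => trivial)
        (fun i _ => (hall i (Finset.mem_univ i)).symm) i trivial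
    exact le_of_eq (Finset.prod_congr rfl fun i _ => by rw [heq i])
  | succ n IH =>
    intro y hy hypos hsumeq hmaj hbound
    by_cases hxy : ∀ i, x i = y i
    · exact le_of_eq (Finset.prod_congr rfl fun i _ => by rw [hxy i])
    -- choose j : smallest index with y j < x j
    have hJ : ∃ j : Fin ℓ, y j < x j ∧ ∀ i, y i < x i → j ≤ i := by
      have hJne : (Finset.univ.filter fun i => y i < x i).Nonempty := by
        rw [Finset.filter_nonempty_iff]
        by_contra hc
        push_neg at hc
        have hle : ∀ i ∈ Finset.univ, x i ≤ y i := fun i _ => hc i (Finset.mem_univ i)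
        exact hxy fun i => (Finset.sum_eq_sum_iff_of_le hle).mp hsumeq i (Finset.mem_univ i)
      exact ⟨(Finset.univ.filter fun i => y i < x i).min' hJne,
        (Finset.mem_filter.mp (Finset.min'_mem _ hJne)).2,
        fun i hi => Finset.min'_le _ _ (Finset.mem_filter.mpr ⟨Finset.mem_univ i, hi⟩)⟩
    obtain ⟨j, hj, hjmin⟩ := hJ
    have hEqBelow : ∀ t : Fin ℓ, t < j → x t = y t := by
      refine partial_sum_eq x y (· < j) (fun a b hab hb => lt_of_le_of_lt hab hb) ?_
      intro i hi
      refine le_antisymm ?_ (hmaj i)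
      refine Finset.sum_le_sum fun t ht => ?_
      have htle : t ≤ i := (Finset.mem_filter.mp ht).2
      by_contra hcc
      exact absurd (hjmin t (by omega)) (not_le.mpr (lt_of_le_of_lt htle hi))
    -- last index
    have hlast : ∀ f : Fin ℓ → ℕ,
        (∑ i ∈ Finset.univ.filter (· ≤ (⟨ℓ - 1, by omega⟩ : Fin ℓ)), f i) = ∑ i, f i := by
      intro f
      apply Finset.sum_congr ?_ (fun _ _ => rfl)
      ext t
      simp only [Finset.mem_filter, Finset.mem_univ, true_and, Fin.le_def, iff_true]
      have := t.isLt
      omega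
    -- choose m : smallest index ≥ j where partial sums agree
    have hM : ∃ m : Fin ℓ, j ≤ m ∧
        ((∑ t ∈ Finset.univ.filter (· ≤ m), x t) = ∑ t ∈ Finset.univ.filter (· ≤ m), y t) ∧
        ∀ i, j ≤ i →
          ((∑ t ∈ Finset.univ.filter (· ≤ i), x t) = ∑ t ∈ Finset.univ.filter (· ≤ i), y t) →
          m ≤ i := by
      have hMne : (Finset.univ.filter fun i => j ≤ i ∧
          (∑ t ∈ Finset.univ.filter (· ≤ i), x t)
            = ∑ t ∈ Finset.univ.filter (· ≤ i), y t).Nonempty := by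
        refine ⟨⟨ℓ - 1, by omega⟩, Finset.mem_filter.mpr ⟨Finset.mem_univ _, ?_, ?_⟩⟩
        · exact Fin.le_def.mpr (show j.val ≤ ℓ - 1 by have := j.isLt; omega)
        · rw [hlast x, hlast y]; exact hsumeq
      have hmem := Finset.mem_filter.mp (Finset.min'_mem _ hMne)
      exact ⟨_, hmem.2.1, hmem.2.2,
        fun i h1 h2 => Finset.min'_le _ _ (Finset.mem_filter.mpr ⟨Finset.mem_univ i, h1, h2⟩)⟩
    obtain ⟨m, hjm, hmS, hmmin⟩ := hM
    have hstrict : ∀ i : Fin ℓ, j ≤ i → i < m →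
        (∑ t ∈ Finset.univ.filter (· ≤ i), y t)
          < ∑ t ∈ Finset.univ.filter (· ≤ i), x t := by
      intro i h1 h2
      refine lt_of_le_of_ne (hmaj i) fun he => ?_
      exact absurd (hmmin i h1 he.symm) (not_le.mpr h2)
    -- choose k : largest index ≤ m with x k < y k
    have hK : ∃ k : Fin ℓ, k ≤ m ∧ x k < y k ∧ ∀ i, i ≤ m → x i < y i → i ≤ k := by
      have hKne : (Finset.univ.filter fun i => i ≤ m ∧ x i < y i).Nonempty := by
        rw [Finset.filter_nonempty_iff]
        by_contra hc
        push_neg at hc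
        have hlt : (∑ t ∈ Finset.univ.filter (· ≤ m), y t)
            < ∑ t ∈ Finset.univ.filter (· ≤ m), x t :=
          Finset.sum_lt_sum (fun i hi => hc i (Finset.mem_univ i)
            (Finset.mem_filter.mp hi).2) ⟨j, Finset.mem_filter.mpr ⟨Finset.mem_univ j, hjm⟩, hj⟩
        omega
      have hmem := Finset.mem_filter.mp (Finset.max'_mem _ hKne)
      exact ⟨_, hmem.2.1, hmem.2.2,
        fun i h1 h2 => Finset.le_max' _ _ (Finset.mem_filter.mpr ⟨Finset.mem_univ i, h1, h2⟩)⟩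
    obtain ⟨k, hkm, hxky, hkmax⟩ := hK
    have hjk : j < k := by
      rcases lt_trichotomy j k with h | h | h
      · exact h
      · exfalso; rw [h] at hj; omega
      · exfalso; have := hEqBelow k h; omega
    have hjk_ne : j ≠ k := ne_of_lt hjk
    have hyk2 : 2 ≤ y k := by have := hxpos k; omega
    have hknext : ∀ h : k.val + 1 < ℓ, y ⟨k.val + 1, h⟩ < y k := by
      intro h
      have hkk1 : k ≤ (⟨k.val + 1, h⟩ : Fin ℓ) := Fin.le_def.mpr (show k.val ≤ k.val + 1 by omega)
      have hle1 : y ⟨k.val + 1, h⟩ ≤ y k := hy hkk1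
      by_contra hcc
      have hyeq : y ⟨k.val + 1, h⟩ = y k := by omega
      have hxk1 : x ⟨k.val + 1, h⟩ ≤ x k := hx hkk1
      have hxk1y : x ⟨k.val + 1, h⟩ < y ⟨k.val + 1, h⟩ := by omega
      rcases le_or_gt (⟨k.val + 1, h⟩ : Fin ℓ) m with hcase | hcase
      · exact absurd (hkmax _ hcase hxk1y)
          (not_le.mpr (Fin.lt_def.mpr (show k.val < k.val + 1 by omega)))
      · have hmk : m = k := Fin.ext (by
          have h1 : m.val < k.val + 1 := hcase
          have h2 : k.val ≤ m.val := hkm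
          omega)
        have hSy1 := lemSucc y k h
        have hSx1 := lemSucc x k h
        have hmaj1 := hmaj ⟨k.val + 1, h⟩
        rw [hmk] at hmS
        omega
    -- the transfer
    set y' := Function.update (Function.update y j (y j + 1)) k (y k - 1) with hy'def
    have hy'j : y' j = y j + 1 := by
      rw [hy'def, Function.update_of_ne hjk_ne, Function.update_self]
    have hy'k : y' k = y k - 1 := by rw [hy'def, Function.update_self]
    have hy'o : ∀ t, t ≠ j → t ≠ k → y' t = y t := fun t h1 h2 => by
      rw [hy'def, Function.update_of_ne h2, Function.update_of_ne h1]
    have hy' : Antitone y' := by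
      intro a b hab
      rcases eq_or_lt_of_le hab with heq | hab'
      · rw [heq]
      · by_cases hbj : b = j
        · have haj : a < j := hbj ▸ hab'
          rw [hbj, hy'j, hy'o a (ne_of_lt haj) (ne_of_lt (lt_trans haj hjk))]
          have h1 : x a = y a := hEqBelow a haj
          have h2 : x j ≤ x a := hx haj.le
          omega
        · by_cases hbk : b = k
          · rw [hbk, hy'k]
            by_cases haj : a = j
            · rw [haj, hy'j]
              have : y k ≤ y j := hy hjk.le
              omega
            · have hak : a ≠ k := by rw [hbk] at hab'; exact ne_of_lt hab'
              rw [hy'o a haj hak]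
              have : y k ≤ y a := by
                apply hy
                rw [← hbk]
                exact hab'.le
              omega
          · rw [hy'o b hbj hbk]
            by_cases haj : a = j
            · rw [haj, hy'j]
              have : y b ≤ y j := by
                apply hy
                rw [← haj]
                exact hab'.le
              omega
            · by_cases hak : a = k
              · rw [hak, hy'k]
                have hkb : k < b := by rw [← hak]; exact hab'
                have hbv : k.val < b.val := hkb
                have hlt : k.val + 1 < ℓ := by have := b.isLt; omega
                have h1 := hknext hlt
                have h2 : y b ≤ y ⟨k.val + 1, hlt⟩ :=
                  hy (Fin.le_def.mpr (show k.val + 1 ≤ b.val by omega))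
                omega
              · rw [hy'o a haj hak]
                exact hy hab'.le
    have hy'pos : ∀ i, 0 < y' i := by
      intro i
      by_cases h1 : i = k
      · rw [h1, hy'k]; omega
      · by_cases h2 : i = j
        · rw [h2, hy'j]; omega
        · rw [hy'o i h2 h1]; exact hypos i
    -- partial sums of y'
    have hSy' : ∀ i : Fin ℓ, (∑ t ∈ Finset.univ.filter (· ≤ i), y' t)
        = if j ≤ i ∧ i < k then (∑ t ∈ Finset.univ.filter (· ≤ i), y t) + 1
          else ∑ t ∈ Finset.univ.filter (· ≤ i), y t := by
      intro i
      by_cases hji : j ≤ i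
      · have hjmem : j ∈ Finset.univ.filter (· ≤ i) :=
          Finset.mem_filter.mpr ⟨Finset.mem_univ j, hji⟩
        by_cases hki : k ≤ i
        · rw [if_neg (fun hc => absurd hki (not_le.mpr hc.2))]
          have hkmem : k ∈ (Finset.univ.filter (· ≤ i)).erase j :=
            Finset.mem_erase.mpr ⟨hjk_ne.symm, Finset.mem_filter.mpr ⟨Finset.mem_univ k, hki⟩⟩
          rw [← Finset.add_sum_erase _ y' hjmem, ← Finset.add_sum_erase _ y hjmem,
              ← Finset.add_sum_erase _ y' hkmem, ← Finset.add_sum_erase _ y hkmem]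
          have hrest : (∑ t ∈ ((Finset.univ.filter (· ≤ i)).erase j).erase k, y' t)
              = ∑ t ∈ ((Finset.univ.filter (· ≤ i)).erase j).erase k, y t := by
            refine Finset.sum_congr rfl fun t ht => ?_
            have h1 := Finset.mem_erase.mp ht
            have h2 := Finset.mem_erase.mp h1.2
            exact hy'o t h2.1 h1.1
          rw [hrest, hy'j, hy'k]
          omega
        · rw [if_pos ⟨hji, not_le.mp hki⟩]
          rw [← Finset.add_sum_erase _ y' hjmem, ← Finset.add_sum_erase _ y hjmem, hy'j]
          have hrest : (∑ t ∈ (Finset.univ.filter (· ≤ i)).erase j, y' t)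
              = ∑ t ∈ (Finset.univ.filter (· ≤ i)).erase j, y t := by
            refine Finset.sum_congr rfl fun t ht => ?_
            have h1 := Finset.mem_erase.mp ht
            have h2 : t ≤ i := (Finset.mem_filter.mp h1.2).2
            refine hy'o t h1.1 fun htk => hki (htk ▸ h2)
          rw [hrest]
          omega
      · rw [if_neg (fun hc => hji hc.1)]
        refine Finset.sum_congr rfl fun t ht => ?_
        have h2 : t ≤ i := (Finset.mem_filter.mp ht).2
        have htj : t < j := lt_of_le_of_lt h2 (not_le.mp hji)
        exact hy'o t (ne_of_lt htj) (ne_of_lt (lt_trans htj hjk))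
    have hmaj' : ∀ i : Fin ℓ, (∑ t ∈ Finset.univ.filter (· ≤ i), y' t)
        ≤ ∑ t ∈ Finset.univ.filter (· ≤ i), x t := by
      intro i
      rw [hSy' i]
      split_ifs with hc
      · exact hstrict i hc.1 (lt_of_lt_of_le hc.2 hkm)
      · exact hmaj i
    have hsumeq' : ∑ i, x i = ∑ i, y' i := by
      have h1 := hSy' ⟨ℓ - 1, by omega⟩
      rw [hlast y', hlast y] at h1
      have hcond : ¬((j ≤ (⟨ℓ - 1, by omega⟩ : Fin ℓ)) ∧ (⟨ℓ - 1, by omega⟩ : Fin ℓ) < k) := by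
        rintro ⟨-, hc2⟩
        have := k.isLt
        have hc2' : ℓ - 1 < k.val := hc2
        omega
      rw [if_neg hcond] at h1
      rw [h1]
      exact hsumeq
    have hbound' : (∑ k', ∑ i ∈ Finset.univ.filter (· ≤ k'), x i)
        ≤ (∑ k', ∑ i ∈ Finset.univ.filter (· ≤ k'), y' i) + n := by
      have hlt : (∑ k' : Fin ℓ, ∑ i ∈ Finset.univ.filter (· ≤ k'), y i)
          < ∑ k' : Fin ℓ, ∑ i ∈ Finset.univ.filter (· ≤ k'), y' i := by
        refine Finset.sum_lt_sum (fun i _ => by rw [hSy' i]; split_ifs <;> omega)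
          ⟨j, Finset.mem_univ j, ?_⟩
        rw [hSy' j, if_pos ⟨le_rfl, hjk⟩]
        omega
      omega
    -- the analytic step
    have hnne : ∀ e : ℕ, (0:ℝ) ≤ ∑ t, η t ^ e :=
      fun e => Finset.sum_nonneg fun t _ => pow_nonneg (hnn t) e
    have hkmem2 : k ∈ Finset.univ.erase j :=
      Finset.mem_erase.mpr ⟨hjk_ne.symm, Finset.mem_univ k⟩
    have hprod : ∀ f : Fin ℓ → ℕ, (∏ i, (∑ t, η t ^ (f i)))
        = (∑ t, η t ^ (f j)) * ((∑ t, η t ^ (f k)) *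
            ∏ i ∈ (Finset.univ.erase j).erase k, (∑ t, η t ^ (f i))) := by
      intro f
      rw [← Finset.mul_prod_erase Finset.univ (fun i => ∑ t, η t ^ (f i)) (Finset.mem_univ j),
        ← Finset.mul_prod_erase (Finset.univ.erase j) (fun i => ∑ t, η t ^ (f i)) hkmem2]
    have hstep : (∏ i, (∑ t, η t ^ (y i))) ≤ ∏ i, (∑ t, η t ^ (y' i)) := by
      rw [hprod y, hprod y']
      have hRe : (∏ i ∈ (Finset.univ.erase j).erase k, (∑ t, η t ^ (y' i)))
          = ∏ i ∈ (Finset.univ.erase j).erase k, (∑ t, η t ^ (y i)) := by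
        refine Finset.prod_congr rfl fun t ht => ?_
        have h1 := Finset.mem_erase.mp ht
        have h2 := Finset.mem_erase.mp h1.2
        rw [hy'o t h2.1 h1.1]
      rw [hRe, hy'j, hy'k]
      have hkey := keyIneq η hnn (y j) (y k) (by omega) (hy hjk.le)
      have hR : (0:ℝ) ≤ ∏ i ∈ (Finset.univ.erase j).erase k, (∑ t, η t ^ (y i)) :=
        Finset.prod_nonneg fun i _ => hnne _
      calc (∑ t, η t ^ (y j)) * ((∑ t, η t ^ (y k)) *
              ∏ i ∈ (Finset.univ.erase j).erase k, (∑ t, η t ^ (y i)))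
          = ((∑ t, η t ^ (y j)) * (∑ t, η t ^ (y k))) *
              ∏ i ∈ (Finset.univ.erase j).erase k, (∑ t, η t ^ (y i)) := by ring
        _ ≤ ((∑ t, η t ^ (y j + 1)) * (∑ t, η t ^ (y k - 1))) *
              ∏ i ∈ (Finset.univ.erase j).erase k, (∑ t, η t ^ (y i)) :=
            mul_le_mul_of_nonneg_right hkey hR
        _ = (∑ t, η t ^ (y j + 1)) * ((∑ t, η t ^ (y k - 1)) *
              ∏ i ∈ (Finset.univ.erase j).erase k, (∑ t, η t ^ (y i))) := by ring
    exact le_trans hstep (IH y' hy' hy'pos hsumeq' hmaj' hbound')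


/-- Monotonicity of products of power sums under majorization: if the partition `x`
majorizes the partition `y` (both with `ℓ` positive parts and equal sums), then
`∏ M_{x i}(η) ≥ ∏ M_{y i}(η)` for any probability distribution `η` over `[d]`. -/
theorem prod_powerSum_le_of_majorize (d ℓ : ℕ) (hd : 0 < d) (hℓ : 0 < ℓ)
    (η : Fin d → ℝ) (hnn : ∀ i, 0 ≤ η i) (hsum : ∑ i, η i = 1)
    (x y : Fin ℓ → ℕ) (hx : Antitone x) (hy : Antitone y)
    (hxpos : ∀ i, 0 < x i) (hypos : ∀ i, 0 < y i)
    (hsumeq : ∑ i, x i = ∑ i, y i)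
    (hmaj : ∀ k : Fin ℓ, ∑ i ∈ Finset.univ.filter (· ≤ k), y i ≤
      ∑ i ∈ Finset.univ.filter (· ≤ k), x i) :
    ∏ i, (∑ t, η t ^ (y i)) ≤ ∏ i, (∑ t, η t ^ (x i)) := by
  exact auxMain hℓ η hnn x hx hxpos
    (∑ k, ∑ i ∈ Finset.univ.filter (· ≤ k), x i)
    y hy hypos hsumeq hmaj (Nat.le_add_left _ _)
end

section
/- Let α ≥ 2 be an integer and let d > 2 be an integer with d > (3α)^{2α/(α−1)}. Let ε be a real number with 1/√d < ε < log d. Define the probability distribution η over [d] by η_1 = (1 + (εd)^{1/α})/d and η_i = (1 − (εd)^{1/α}/(d−1))/d for i = 2,…,d, and let u be the uniform distribution over [d] (u_i = 1/d for all i). Then |S_α(u) − S_α(η)| ≥ (1/(α−1)) · log(1 + 2ε/3). -/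
open Finset

/-- The two spectra `η` (a perturbation of uniform) and `u` (uniform) over `[d]` have
Rényi entropies of order `α` differing by at least `(1/(α-1))·log(1 + 2ε/3)`, whenever
`α ≥ 2` is an integer, `d > 2`, `d > (3α)^(2α/(α-1))`, and `1/√d < ε < log d`. -/
theorem renyi_entropy_gap (α : ℕ) (hα : 2 ≤ α) (d : ℕ) (hd2 : 2 < d)
    (hd : ((3 * α : ℕ) : ℝ) ^ ((2 * (α : ℝ)) / ((α : ℝ) - 1)) < (d : ℝ))
    (ε : ℝ) (hε1 : 1 / Real.sqrt d < ε) (hε2 : ε < Real.log d) :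
    let η : Fin d → ℝ := fun i =>
      if i = ⟨0, by omega⟩ then (1 + (ε * d) ^ (1 / (α : ℝ))) / d
      else (1 - (ε * d) ^ (1 / (α : ℝ)) / ((d : ℝ) - 1)) / d
    let u : Fin d → ℝ := fun _ => 1 / d
    let Sα : (Fin d → ℝ) → ℝ := fun p => (1 / (1 - (α : ℝ))) * Real.log (∑ i, p i ^ (α : ℝ))
    (1 / ((α : ℝ) - 1)) * Real.log (1 + 2 * ε / 3) ≤ |Sα u - Sα η| := by
  intro η u Sα
  have hd0 : (0:ℝ) < d := by positivity
  have hd3 : (3:ℝ) ≤ d := by exact_mod_cast hd2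
  have hα2 : (2:ℝ) ≤ (α:ℝ) := by exact_mod_cast hα
  have hα0 : (0:ℝ) < (α:ℝ) := by linarith
  have hαn : (α:ℝ) ≠ 0 := ne_of_gt hα0
  have hα1 : (0:ℝ) < (α:ℝ) - 1 := by linarith
  have hsd : 0 < Real.sqrt d := Real.sqrt_pos.mpr hd0
  have hε0 : 0 < ε := lt_trans (by positivity) hε1
  have hεd : 0 < ε * d := by positivity
  set t : ℝ := (ε * d) ^ (1 / (α : ℝ)) with hT
  have ht0 : 0 ≤ t := Real.rpow_nonneg hεd.le _
  have htα : t ^ α = ε * d := by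
    rw [hT, ← Real.rpow_natCast ((ε*d) ^ (1/(α:ℝ))) α, ← Real.rpow_mul hεd.le,
      one_div, inv_mul_cancel₀ hαn, Real.rpow_one]
  have hsqd : Real.sqrt d < ε * d := by
    have h1 : (1 / Real.sqrt d) * d = Real.sqrt d := by
      rw [div_mul_eq_mul_div, one_mul, Real.div_sqrt]
    calc Real.sqrt d = (1 / Real.sqrt d) * d := h1.symm
      _ < ε * d := mul_lt_mul_of_pos_right hε1 hd0
  have hce : (3*(α:ℝ)) ^ ((α:ℝ)/((α:ℝ)-1)) < ε * d := by
    have h1 : (3*(α:ℝ)) ^ ((α:ℝ)/((α:ℝ)-1))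
        = ((3*(α:ℝ)) ^ ((2*(α:ℝ))/((α:ℝ)-1))) ^ ((1:ℝ)/2) := by
      rw [← Real.rpow_mul (by positivity)]
      congr 1
      ring
    have hd' : (3*(α:ℝ)) ^ ((2*(α:ℝ))/((α:ℝ)-1)) < (d:ℝ) := by
      push_cast at hd; convert hd using 2
    have h2 : ((3*(α:ℝ)) ^ ((2*(α:ℝ))/((α:ℝ)-1))) ^ ((1:ℝ)/2) < (d:ℝ) ^ ((1:ℝ)/2) :=
      Real.rpow_lt_rpow (by positivity) hd' (by norm_num)
    have h3 : (d:ℝ) ^ ((1:ℝ)/2) = Real.sqrt d := (Real.sqrt_eq_rpow d).symm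
    rw [h1]
    calc ((3*(α:ℝ)) ^ ((2*(α:ℝ))/((α:ℝ)-1))) ^ ((1:ℝ)/2) < (d:ℝ) ^ ((1:ℝ)/2) := h2
      _ = Real.sqrt d := h3
      _ < ε * d := hsqd
  have hkey : (α:ℝ) * t ≤ ε * d / 3 := by
    have e1 : (3*(α:ℝ)) ≤ (ε*d) ^ (((α:ℝ)-1)/(α:ℝ)) := by
      have e0 : (3*(α:ℝ)) = ((3*(α:ℝ)) ^ ((α:ℝ)/((α:ℝ)-1))) ^ (((α:ℝ)-1)/(α:ℝ)) := by
        rw [← Real.rpow_mul (by positivity),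
          show ((α:ℝ)/((α:ℝ)-1)) * (((α:ℝ)-1)/(α:ℝ)) = 1 by field_simp, Real.rpow_one]
      rw [e0]
      exact Real.rpow_le_rpow (by positivity) hce.le (by positivity)
    have e2 : t * (3*(α:ℝ)) ≤ ε * d := by
      calc t * (3*(α:ℝ)) ≤ t * (ε*d) ^ (((α:ℝ)-1)/(α:ℝ)) :=
            mul_le_mul_of_nonneg_left e1 ht0
        _ = (ε*d) ^ (1/(α:ℝ) + ((α:ℝ)-1)/(α:ℝ)) := by
            rw [hT, ← Real.rpow_add hεd]
        _ = ε * d := by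
            rw [show (1/(α:ℝ) + ((α:ℝ)-1)/(α:ℝ)) = 1 by field_simp; ring, Real.rpow_one]
    linarith
  have htd : t ≤ (d:ℝ) := by
    rcases le_or_gt t 1 with h | h
    · linarith
    · have h2 : t^2 ≤ t^α := pow_le_pow_right₀ h.le hα
      have hlog := Real.log_le_sub_one_of_pos hd0
      have h3 : ε * d < (d:ℝ) * d := by nlinarith
      nlinarith
  set s : ℝ := t / ((d:ℝ)-1) with hS
  have hd1 : (0:ℝ) < (d:ℝ) - 1 := by linarith
  have hs2 : s ≤ 2 := by rw [hS, div_le_iff₀ hd1]; linarith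
  have hbern : 1 - (α:ℝ)*s ≤ (1 - s)^α := by
    have h := one_add_mul_le_pow (show (-2:ℝ) ≤ -s by linarith) α
    have h2 : (1:ℝ) + -s = 1 - s := by ring
    rw [h2] at h
    nlinarith [h]
  -- sums
  have hcast : ∀ x : ℝ, x ^ ((α:ℕ):ℝ) = x ^ α := fun x => Real.rpow_natCast x α
  have hSu : Sα u = (1/(1-(α:ℝ))) * Real.log ((d:ℝ) * ((1:ℝ)/d)^α) := by
    show (1/(1-(α:ℝ))) * Real.log (∑ _i : Fin d, ((1:ℝ)/d) ^ ((α:ℕ):ℝ)) = _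
    rw [Finset.sum_const, Finset.card_univ, Fintype.card_fin, nsmul_eq_mul, hcast]
  have hSη : Sα η = (1/(1-(α:ℝ))) * Real.log (((1+t)/d)^α + ((d:ℝ)-1) * ((1-s)/d)^α) := by
    have hz : (0:ℕ) < d := by omega
    have hbody : ∑ i, η i ^ ((α:ℕ):ℝ)
        = ((1+t)/d)^α + ((d:ℝ)-1) * ((1-s)/d)^α := by
      have hηdef : η = fun i : Fin d =>
          if i = (⟨0, hz⟩ : Fin d) then (1 + t) / d else (1 - s) / d := rfl
      rw [hηdef]
      simp only [hcast]
      rw [← Finset.add_sum_erase _ _ (Finset.mem_univ (⟨0, hz⟩ : Fin d)), if_pos rfl]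
      congr 1
      rw [Finset.sum_congr rfl (fun i hi => by
        rw [if_neg (Finset.ne_of_mem_erase hi)]),
        Finset.sum_const, Finset.card_erase_of_mem (Finset.mem_univ _),
        Finset.card_univ, Fintype.card_fin, nsmul_eq_mul]
      congr 1
      push_cast [Nat.cast_sub (show 1 ≤ d by omega)]
      ring
    show (1/(1-(α:ℝ))) * Real.log (∑ i, η i ^ ((α:ℕ):ℝ)) = _
    rw [hbody]
  -- main inequality on sums
  have hA : (0:ℝ) < (d:ℝ) * ((1:ℝ)/d)^α := by positivity
  have hdα : (0:ℝ) < (d:ℝ)^α := by positivity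
  have hmain : (1 + 2*ε/3) * ((d:ℝ) * ((1:ℝ)/d)^α)
      ≤ ((1+t)/d)^α + ((d:ℝ)-1) * ((1-s)/d)^α := by
    have p1 : (1 + ε*d)/(d:ℝ)^α ≤ ((1+t)/d)^α := by
      rw [div_pow]
      have h1 : 1 + ε*d ≤ (1+t)^α := by
        calc 1 + ε*d = 1^α + t^α := by rw [one_pow, htα]
          _ ≤ (1+t)^α := pow_add_pow_le zero_le_one ht0 (by omega)
      exact div_le_div_of_nonneg_right h1 hdα.le
    have p2 : ((d:ℝ)-1 - α*t)/(d:ℝ)^α ≤ ((d:ℝ)-1) * ((1-s)/d)^α := by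
      rw [div_pow, ← mul_div_assoc]
      have hnum : (d:ℝ)-1-α*t = ((d:ℝ)-1) * (1 - α*s) := by
        rw [hS]; field_simp
      have h1 : (d:ℝ)-1-α*t ≤ ((d:ℝ)-1) * (1-s)^α := by
        rw [hnum]; exact mul_le_mul_of_nonneg_left hbern (by linarith)
      exact div_le_div_of_nonneg_right h1 hdα.le
    have p3 : (1 + 2*ε/3) * ((d:ℝ) * ((1:ℝ)/d)^α) = ((d:ℝ) + 2*ε*d/3)/(d:ℝ)^α := by
      rw [one_div, inv_pow]
      field_simp
    rw [p3]
    calc ((d:ℝ) + 2*ε*d/3)/(d:ℝ)^α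
        ≤ ((1+ε*d) + ((d:ℝ)-1-α*t))/(d:ℝ)^α := by
          apply div_le_div_of_nonneg_right _ hdα.le
          linarith
      _ = (1+ε*d)/(d:ℝ)^α + ((d:ℝ)-1-α*t)/(d:ℝ)^α := by ring
      _ ≤ _ := add_le_add p1 p2
  have harg : (0:ℝ) < 1 + 2*ε/3 := by linarith
  have hBpos : 0 < ((1+t)/d)^α + ((d:ℝ)-1) * ((1-s)/d)^α :=
    lt_of_lt_of_le (by positivity) hmain
  have hlog : Real.log (1+2*ε/3) + Real.log ((d:ℝ)*((1:ℝ)/d)^α)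
      ≤ Real.log (((1+t)/d)^α + ((d:ℝ)-1) * ((1-s)/d)^α) := by
    rw [← Real.log_mul (ne_of_gt harg) (ne_of_gt hA)]
    exact Real.log_le_log (by positivity) hmain
  have hne1 : (1:ℝ) - (α:ℝ) ≠ 0 := by intro h; linarith
  have hne2 : (α:ℝ) - 1 ≠ 0 := ne_of_gt hα1
  have hSud : Sα u - Sα η
      = (1/((α:ℝ)-1)) * (Real.log (((1+t)/d)^α + ((d:ℝ)-1) * ((1-s)/d)^α)
        - Real.log ((d:ℝ)*((1:ℝ)/d)^α)) := by
    rw [hSu, hSη]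
    field_simp
    ring
  calc (1/((α:ℝ)-1)) * Real.log (1 + 2*ε/3)
      ≤ (1/((α:ℝ)-1)) * (Real.log (((1+t)/d)^α + ((d:ℝ)-1) * ((1-s)/d)^α)
        - Real.log ((d:ℝ)*((1:ℝ)/d)^α)) := by
        apply mul_le_mul_of_nonneg_left (by linarith) (by positivity)
    _ = Sα u - Sα η := hSud.symm
    _ ≤ |Sα u - Sα η| := le_abs_self _
end

section
/- Let m ≥ 2 be an integer and let μ be a partition of m, with the convention μ_i = 0 for i > ℓ(μ). Then ∏_{i=1}^∞ (μ_i − μ_{i+1} + 1) < m^{√(2m)}, where all but finitely many factors of the product equal 1 and the right-hand side uses the real exponent √(2m). -/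
/-- Abel-summation style identity for an antitone sequence of naturals. -/
lemma abel_aux (μ : ℕ → ℕ) (hμ : Antitone μ) :
    ∀ N : ℕ, ∑ i ∈ Finset.range N, (i + 1) * (μ i - μ (i + 1)) + N * μ N
      = ∑ i ∈ Finset.range N, μ i := by
  intro N
  induction N with
  | zero => simp
  | succ n ih =>
    rw [Finset.sum_range_succ, Finset.sum_range_succ (f := μ)]
    have h1 : μ (n + 1) ≤ μ n := hμ (Nat.le_succ n)
    have h2 : (n + 1) * (μ n - μ (n + 1)) + (n + 1) * μ (n + 1) = (n + 1) * μ n := by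
      rw [← Nat.mul_add, Nat.sub_add_cancel h1]
    have h3 : (n + 1) * μ n = n * μ n + μ n := by ring
    rw [add_assoc, h2, h3, ← add_assoc, ih]

/-- Sum of successors over a finset of naturals is at least triangular. -/
lemma card_aux (S : Finset ℕ) : S.card * (S.card + 1) ≤ 2 * ∑ i ∈ S, (i + 1) := by
  induction S using Finset.induction_on_max with
  | empty => simp
  | insert a S ha ih =>
    have hnm : a ∉ S := fun h => lt_irrefl a (ha a h)
    rw [Finset.sum_insert hnm, Finset.card_insert_of_notMem hnm]
    have hcard : S.card ≤ a := by
      have hsub : S ⊆ Finset.range a := fun x hx => Finset.mem_range.mpr (ha x hx)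
      simpa using Finset.card_le_card hsub
    nlinarith [ih]

/-- For a partition `μ` of an integer `m ≥ 2` (a nonincreasing, finitely supported
sequence `μ : ℕ → ℕ` with `∑ᶠ i, μ i = m`, indexed from 0), we have
`∏_i (μ_i - μ_{i+1} + 1) < m^√(2m)`. -/
theorem prod_diff_lt (m : ℕ) (hm : 2 ≤ m) (μ : ℕ → ℕ) (hμ : Antitone μ)
    (hfin : (Function.support μ).Finite) (hsum : ∑ᶠ i, μ i = m) :
    ((∏ᶠ i, (μ i - μ (i + 1) + 1) : ℕ) : ℝ) < (m : ℝ) ^ Real.sqrt (2 * m) := by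
  -- find N past which μ vanishes
  obtain ⟨N, hN⟩ : ∃ n, μ n = 0 := by
    obtain ⟨n, hn⟩ := (hfin.infinite_compl).nonempty
    exact ⟨n, by simpa [Function.support] using hn⟩
  have hzero : ∀ i, N ≤ i → μ i = 0 := fun i hi => Nat.le_zero.mp (hN ▸ hμ hi)
  have hsupp : Function.support μ ⊆ ↑(Finset.range N) := by
    intro i hi
    simp only [Finset.coe_range, Set.mem_Iio]
    by_contra h
    exact hi (hzero i (le_of_not_gt h))
  have hsum' : ∑ i ∈ Finset.range N, μ i = m := by
    rw [← finsum_eq_sum_of_support_subset μ hsupp, hsum]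
  have hprod : (∏ᶠ i, (μ i - μ (i + 1) + 1))
      = ∏ i ∈ Finset.range N, (μ i - μ (i + 1) + 1) := by
    apply finprod_eq_prod_of_mulSupport_subset
    intro i hi
    simp only [Finset.coe_range, Set.mem_Iio]
    by_contra h
    push_neg at h
    apply hi
    have h1 : μ i = 0 := hzero i h
    have h2 : μ (i + 1) = 0 := hzero (i + 1) (le_trans h (Nat.le_succ i))
    simp [h1, h2]
  -- Abel summation
  have habel : ∑ i ∈ Finset.range N, (i + 1) * (μ i - μ (i + 1)) = m := by
    have := abel_aux μ hμ N
    rw [hzero N le_rfl, Nat.mul_zero, Nat.add_zero, hsum'] at this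
    exact this
  -- the set of strict descents
  set S : Finset ℕ := (Finset.range N).filter (fun i => μ (i + 1) < μ i) with hS
  have hprodS : ∏ i ∈ Finset.range N, (μ i - μ (i + 1) + 1)
      = ∏ i ∈ S, (μ i - μ (i + 1) + 1) := by
    symm
    apply Finset.prod_subset (Finset.filter_subset _ _)
    intro i hi hni
    have : ¬ (μ (i + 1) < μ i) := by
      intro h; exact hni (Finset.mem_filter.mpr ⟨hi, h⟩)
    have : μ i - μ (i + 1) = 0 := by omega
    simp [this]
  have hSsum : ∑ i ∈ S, (i + 1) ≤ m := by
    calc ∑ i ∈ S, (i + 1) ≤ ∑ i ∈ S, (i + 1) * (μ i - μ (i + 1)) := by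
          apply Finset.sum_le_sum
          intro i hi
          have h1 : μ (i + 1) < μ i := (Finset.mem_filter.mp hi).2
          have h2 : 1 ≤ μ i - μ (i + 1) := by omega
          exact Nat.le_mul_of_pos_right _ (by omega)
      _ ≤ ∑ i ∈ Finset.range N, (i + 1) * (μ i - μ (i + 1)) :=
          Finset.sum_le_sum_of_subset (Finset.filter_subset _ _)
      _ = m := habel
  have hd : S.card * (S.card + 1) ≤ 2 * m := le_trans (card_aux S) (by omega)
  have hm1 : (1 : ℝ) < (m : ℝ) := by exact_mod_cast hm.trans_lt' one_lt_two
  rw [hprod, hprodS]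
  by_cases hcase : S.card ≤ 1
  · -- product is at most m + 1 < m^2 ≤ m^√(2m)
    have hfac : ∀ i ∈ S, μ i - μ (i + 1) + 1 ≤ m + 1 := by
      intro i hi
      have hiN : i ∈ Finset.range N := Finset.mem_of_mem_filter i hi
      have h1 : μ i ≤ m := hsum' ▸ Finset.single_le_sum (fun j _ => Nat.zero_le _) hiN
      have h2 : μ i - μ (i + 1) ≤ μ i := Nat.sub_le _ _
      omega
    have hP : ∏ i ∈ S, (μ i - μ (i + 1) + 1) ≤ m + 1 := by
      calc ∏ i ∈ S, (μ i - μ (i + 1) + 1) ≤ (m + 1) ^ S.card :=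
            Finset.prod_le_pow_card S _ (m + 1) hfac
        _ ≤ (m + 1) ^ 1 := Nat.pow_le_pow_right (by omega) hcase
        _ = m + 1 := pow_one _
    have hm2 : (2 : ℝ) ≤ (m : ℝ) := by exact_mod_cast hm
    have h2le : (2 : ℝ) ≤ Real.sqrt (2 * m) := by
      rw [Real.le_sqrt (by norm_num) (by positivity)]
      nlinarith [hm2]
    calc ((∏ i ∈ S, (μ i - μ (i + 1) + 1) : ℕ) : ℝ) ≤ (m + 1 : ℕ) := by exact_mod_cast hP
      _ < (m : ℝ) ^ (2 : ℝ) := by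
          rw [show ((2:ℝ)) = ((2:ℕ):ℝ) by norm_num, Real.rpow_natCast]
          push_cast
          nlinarith [hm2]
      _ ≤ (m : ℝ) ^ Real.sqrt (2 * m) := (Real.rpow_le_rpow_left_iff hm1).mpr h2le
  · -- S.card ≥ 2 : every factor is at most m, so product ≤ m ^ S.card < m ^ √(2m)
    push_neg at hcase
    have hfac : ∀ i ∈ S, μ i - μ (i + 1) + 1 ≤ m := by
      intro i hi
      obtain ⟨j, hj, hji⟩ := Finset.exists_mem_ne hcase i
      have hpair : (i + 1) * (μ i - μ (i + 1)) + (j + 1) * (μ j - μ (j + 1)) ≤ m := by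
        have hsub : ({i, j} : Finset ℕ) ⊆ Finset.range N := by
          intro k hk
          rcases Finset.mem_insert.mp hk with h | h
          · exact h ▸ Finset.mem_of_mem_filter i hi
          · exact (Finset.mem_singleton.mp h) ▸ Finset.mem_of_mem_filter j hj
        calc (i + 1) * (μ i - μ (i + 1)) + (j + 1) * (μ j - μ (j + 1))
            = ∑ k ∈ ({i, j} : Finset ℕ), (k + 1) * (μ k - μ (k + 1)) :=
              (Finset.sum_pair (f := fun k => (k + 1) * (μ k - μ (k + 1))) hji.symm).symm
          _ ≤ ∑ k ∈ Finset.range N, (k + 1) * (μ k - μ (k + 1)) :=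
              Finset.sum_le_sum_of_subset hsub
          _ = m := habel
      have hj1 : μ (j + 1) < μ j := (Finset.mem_filter.mp hj).2
      have hjpos : 1 ≤ (j + 1) * (μ j - μ (j + 1)) := Nat.one_le_iff_ne_zero.mpr (by
        have : 1 ≤ μ j - μ (j + 1) := by omega
        positivity)
      have hile : μ i - μ (i + 1) ≤ (i + 1) * (μ i - μ (i + 1)) :=
        Nat.le_mul_of_pos_left _ (Nat.succ_pos i)
      calc μ i - μ (i + 1) + 1 ≤ (i + 1) * (μ i - μ (i + 1)) + (j + 1) * (μ j - μ (j + 1)) :=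
            add_le_add hile hjpos
        _ ≤ m := hpair
    have hP : ∏ i ∈ S, (μ i - μ (i + 1) + 1) ≤ m ^ S.card :=
      Finset.prod_le_pow_card S _ m hfac
    have hdlt : (S.card : ℝ) < Real.sqrt (2 * m) := by
      rw [Real.lt_sqrt (by positivity)]
      have h : S.card * S.card < 2 * m := by nlinarith [hd, hcase]
      rw [sq]
      exact_mod_cast h
    calc ((∏ i ∈ S, (μ i - μ (i + 1) + 1) : ℕ) : ℝ) ≤ ((m ^ S.card : ℕ) : ℝ) := by
          exact_mod_cast hP
      _ = (m : ℝ) ^ (S.card : ℝ) := by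
          push_cast
          rw [Real.rpow_natCast]
      _ < (m : ℝ) ^ Real.sqrt (2 * m) := (Real.rpow_lt_rpow_left_iff hm1).mpr hdlt
end

section
/- Let d be a positive integer and let x_1,…,x_d be real numbers satisfying Σ_{i=1}^d x_i = 0 and Σ_{i=1}^d x_i^2 ≤ 4. Then Σ_{i=1}^d x_i · log(1/x_i^2) ≤ (16/e)·√d, where a term with x_i = 0 is interpreted as 0. -/
/-- Core pointwise bound: `u * log(1/u²) ≤ u² + 2/e` for all real `u`. -/
lemma core_xlog (u : ℝ) : u * Real.log (1 / u ^ 2) ≤ u ^ 2 + 2 / Real.exp 1 := by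
  rcases eq_or_ne u 0 with rfl | hu
  · simp
    positivity
  rw [one_div, Real.log_inv]
  rcases lt_or_gt_of_ne hu with hneg | hpos
  · -- u < 0 : need  (-u) * log(u²) ≤ u² + 2/e ; suffices 2v log v ≤ v² with v = -u
    have hv : (0 : ℝ) < -u := by linarith
    have hlog : Real.log (u ^ 2) = 2 * Real.log (-u) := by
      rw [show u ^ 2 = (-u) ^ 2 by ring, Real.log_pow]
      push_cast; ring
    have hsv : (0 : ℝ) < Real.sqrt (-u) := Real.sqrt_pos.mpr hv
    have h1 : Real.log (Real.sqrt (-u)) ≤ Real.sqrt (-u) - 1 :=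
      Real.log_le_sub_one_of_pos hsv
    have h2 : Real.log (-u) = 2 * Real.log (Real.sqrt (-u)) := by
      rw [Real.log_sqrt hv.le]; ring
    have hss : Real.sqrt (-u) * Real.sqrt (-u) = -u := Real.mul_self_sqrt hv.le
    have hepos : (0 : ℝ) < 2 / Real.exp 1 := by positivity
    rw [hlog]
    nlinarith [sq_nonneg (Real.sqrt (-u) * (Real.sqrt (-u) - 2)), hsv.le]
  · -- u > 0 : -2 u log u ≤ 2/e
    have hlog : Real.log (u ^ 2) = 2 * Real.log u := by
      rw [Real.log_pow]; push_cast; ring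
    have h1 : Real.log (1 / (Real.exp 1 * u)) ≤ 1 / (Real.exp 1 * u) - 1 :=
      Real.log_le_sub_one_of_pos (by positivity)
    have h2 : Real.log (1 / (Real.exp 1 * u)) = -(1 + Real.log u) := by
      rw [one_div, Real.log_inv, Real.log_mul (Real.exp_ne_zero 1) (ne_of_gt hpos),
        Real.log_exp]
    rw [h2] at h1
    have he : (0 : ℝ) < Real.exp 1 := Real.exp_pos 1
    -- from h1 : -(1+log u) ≤ 1/(e u) - 1, get -log u ≤ 1/(e u), so -u log u ≤ 1/e
    have h3 : -Real.log u ≤ 1 / (Real.exp 1 * u) := by linarith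
    have h4 : u * (-Real.log u) ≤ u * (1 / (Real.exp 1 * u)) :=
      mul_le_mul_of_nonneg_left h3 hpos.le
    have h5 : u * (1 / (Real.exp 1 * u)) = 1 / Real.exp 1 := by
      field_simp
    have h6 : u * (-Real.log u) ≤ 1 / Real.exp 1 := h5 ▸ h4
    have h7 : 2 / Real.exp 1 = 2 * (1 / Real.exp 1) := by ring
    rw [hlog]
    nlinarith [sq_nonneg u]

/-- Scaled bound: for `t > 0`, `x log(1/x²) ≤ x²/t + 2t/e + x log(1/t²)`. -/
lemma scaled_xlog (t : ℝ) (ht : 0 < t) (x : ℝ) :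
    x * Real.log (1 / x ^ 2) ≤ x ^ 2 / t + 2 * t / Real.exp 1 + x * Real.log (1 / t ^ 2) := by
  rcases eq_or_ne x 0 with rfl | hx
  · simp
    positivity
  have hu : x / t ≠ 0 := div_ne_zero hx (ne_of_gt ht)
  have hsplit : Real.log (1 / x ^ 2) = Real.log (1 / (x / t) ^ 2) + Real.log (1 / t ^ 2) := by
    rw [← Real.log_mul (by positivity) (by positivity)]
    congr 1
    field_simp
  have hcore := core_xlog (x / t)
  have hmul := mul_le_mul_of_nonneg_left hcore ht.le
  have hxu : x * Real.log (1 / (x / t) ^ 2) = t * ((x / t) * Real.log (1 / (x / t) ^ 2)) := by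
    field_simp
  have ht2 : t * ((x / t) ^ 2 + 2 / Real.exp 1) = x ^ 2 / t + 2 * t / Real.exp 1 := by
    field_simp
  rw [hsplit, mul_add, hxu]
  linarith [hmul, ht2.le, ht2.ge]

/-- If `x_1,…,x_d` are reals with `∑ x_i = 0` and `∑ x_i² ≤ 4`, then
`∑ x_i · log(1/x_i²) ≤ (16/e)·√d` (a term with `x_i = 0` is `0`, which
is automatic since in Lean `log (1/0) = 0`). -/
theorem sum_xlog_le (d : ℕ) (hd : 0 < d) (x : Fin d → ℝ)
    (hsum : ∑ i, x i = 0) (hsq : ∑ i, (x i) ^ 2 ≤ 4) :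
    ∑ i, x i * Real.log (1 / (x i) ^ 2) ≤ (16 / Real.exp 1) * Real.sqrt d := by
  set s := Real.sqrt d with hs_def
  have hs : 0 < s := Real.sqrt_pos.mpr (by exact_mod_cast hd)
  have hss : s * s = d := Real.mul_self_sqrt (Nat.cast_nonneg d)
  set t : ℝ := 2 / s with ht_def
  have ht : 0 < t := by positivity
  have he : (0 : ℝ) < Real.exp 1 := Real.exp_pos 1
  have he6 : Real.exp 1 < 6 := by
    have := Real.exp_one_lt_d9
    linarith
  calc ∑ i, x i * Real.log (1 / (x i) ^ 2)
      ≤ ∑ i, ((x i) ^ 2 / t + 2 * t / Real.exp 1 + x i * Real.log (1 / t ^ 2)) :=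
        Finset.sum_le_sum fun i _ => scaled_xlog t ht (x i)
    _ = (∑ i, (x i) ^ 2) / t + d * (2 * t / Real.exp 1)
          + (∑ i, x i) * Real.log (1 / t ^ 2) := by
        rw [Finset.sum_add_distrib, Finset.sum_add_distrib, Finset.sum_div,
          Finset.sum_const, Finset.card_univ, Fintype.card_fin, ← Finset.sum_mul]
        simp [nsmul_eq_mul]
    _ = (∑ i, (x i) ^ 2) / t + d * (2 * t / Real.exp 1) := by
        rw [hsum]; ring
    _ ≤ 4 / t + d * (2 * t / Real.exp 1) := by
        gcongr
    _ = 2 * s + 4 * s / Real.exp 1 := by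
        rw [ht_def, ← hss]
        field_simp
        ring
    _ ≤ (16 / Real.exp 1) * s := by
        have h8 : 4 * s / Real.exp 1 * Real.exp 1 = 4 * s := by field_simp
        have h9 : s * Real.exp 1 < s * 6 := mul_lt_mul_of_pos_left he6 hs
        rw [div_mul_eq_mul_div, le_div_iff₀ he]
        nlinarith
end

section
/- Let n and d be positive integers, and let λ = (λ_1 ≥ λ_2 ≥ ⋯ ≥ λ_d ≥ 0) and λ' = (λ'_1 ≥ λ'_2 ≥ ⋯ ≥ λ'_d ≥ 0) be nonincreasing tuples of nonnegative integers with Σ_{i=1}^d λ_i = Σ_{i=1}^d λ'_i = n, and suppose that |Σ_{i=1}^j (λ_i − λ'_i)| ≤ 1 for every j ∈ {1,…,d}. Define Z(λ) = Σ_{i=1}^d |λ_i/n − 1/d|. Then |Z(λ) − Z(λ')| ≤ 14/n. -/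
open Finset

lemma abs_sum_eq_twice_pos (d : ℕ) (f : Fin d → ℝ) (hf : ∑ i, f i = 0) :
    ∑ i, |f i| = 2 * ∑ i ∈ univ.filter (fun i => 0 ≤ f i), f i := by
  have h := Finset.sum_filter_add_sum_filter_not univ (fun i => 0 ≤ f i) f
  have h2 := Finset.sum_filter_add_sum_filter_not univ (fun i => 0 ≤ f i) (fun i => |f i|)
  have e1 : ∑ i ∈ univ.filter (fun i => 0 ≤ f i), |f i|
      = ∑ i ∈ univ.filter (fun i => 0 ≤ f i), f i :=
    Finset.sum_congr rfl (fun i hi => abs_of_nonneg (mem_filter.mp hi).2)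
  have e2 : ∑ i ∈ univ.filter (fun i => ¬ 0 ≤ f i), |f i|
      = -∑ i ∈ univ.filter (fun i => ¬ 0 ≤ f i), f i := by
    rw [← Finset.sum_neg_distrib]
    exact Finset.sum_congr rfl (fun i hi => abs_of_neg (lt_of_not_ge (mem_filter.mp hi).2))
  rw [hf] at h
  linarith

lemma sum_le_pos_sum (d : ℕ) (g : Fin d → ℝ) (S : Finset (Fin d)) :
    ∑ i ∈ S, g i ≤ ∑ i ∈ univ.filter (fun i => 0 ≤ g i), g i := by
  have h1 : ∑ i ∈ S, g i ≤ ∑ i ∈ S.filter (fun i => 0 ≤ g i), g i := by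
    have h := Finset.sum_filter_add_sum_filter_not S (fun i => 0 ≤ g i) g
    have : ∑ i ∈ S.filter (fun i => ¬ 0 ≤ g i), g i ≤ 0 :=
      Finset.sum_nonpos (fun i hi => le_of_lt (lt_of_not_ge (mem_filter.mp hi).2))
    linarith
  refine h1.trans (Finset.sum_le_sum_of_subset_of_nonneg ?_ (fun i hi _ => (mem_filter.mp hi).2))
  intro i hi
  simp only [mem_filter, mem_univ, true_and] at *
  exact hi.2

lemma key_real (d : ℕ) (f g : Fin d → ℝ) (ε : ℝ) (hε : 0 ≤ ε)
    (hfa : Antitone f) (hsf : ∑ i, f i = 0) (hsg : ∑ i, g i = 0)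
    (hdiff : ∀ j : Fin d, |∑ i ∈ univ.filter (· ≤ j), (f i - g i)| ≤ ε) :
    ∑ i, |f i| ≤ ∑ i, |g i| + 2 * ε := by
  rw [abs_sum_eq_twice_pos d f hsf, abs_sum_eq_twice_pos d g hsg]
  set A := univ.filter (fun i => 0 ≤ f i) with hA
  rcases A.eq_empty_or_nonempty with h | h
  · rw [h]
    have hBnn : 0 ≤ ∑ i ∈ univ.filter (fun i => 0 ≤ g i), g i :=
      Finset.sum_nonneg (fun i hi => (mem_filter.mp hi).2)
    simp only [Finset.sum_empty, mul_zero]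
    linarith
  · set j := A.max' h with hj
    have hjA : j ∈ A := A.max'_mem h
    have hjf : 0 ≤ f j := (mem_filter.mp hjA).2
    have hAj : A = univ.filter (· ≤ j) := by
      ext i
      simp only [hA, mem_filter, mem_univ, true_and]
      constructor
      · intro hi
        exact A.le_max' i (by simp [hA, hi])
      · intro hi
        exact le_trans hjf (hfa hi)
    have step1 : ∑ i ∈ A, f i ≤ ∑ i ∈ A, g i + ε := by
      have hd := hdiff j
      rw [← hAj, Finset.sum_sub_distrib] at hd
      have := (abs_le.mp hd).2
      linarith
    have step2 : ∑ i ∈ A, g i ≤ ∑ i ∈ univ.filter (fun i => 0 ≤ g i), g i :=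
      sum_le_pos_sum d g A
    linarith

/-- If `λ` and `λ'` are nonincreasing tuples of nonnegative integers summing to `n` whose
prefix sums differ by at most 1 everywhere, then the ℓ1 distances of `λ/n` and `λ'/n` from
the uniform distribution over `[d]` differ by at most `14/n`. -/
theorem Z_lipschitz (n d : ℕ) (hn : 0 < n) (hd : 0 < d)
    (lam lam' : Fin d → ℕ) (h1 : Antitone lam) (h2 : Antitone lam')
    (hs1 : ∑ i, lam i = n) (hs2 : ∑ i, lam' i = n)
    (hdiff : ∀ j : Fin d,
      |∑ i ∈ Finset.univ.filter (· ≤ j), ((lam i : ℝ) - (lam' i : ℝ))| ≤ 1) :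
    |(∑ i, |(lam i : ℝ) / n - 1 / d|) - (∑ i, |(lam' i : ℝ) / n - 1 / d|)| ≤ 14 / n := by
  have hn' : (0 : ℝ) < n := by exact_mod_cast hn
  have hd' : (0 : ℝ) < d := by exact_mod_cast hd
  set f : Fin d → ℝ := fun i => (lam i : ℝ) / n - 1 / d with hf
  set g : Fin d → ℝ := fun i => (lam' i : ℝ) / n - 1 / d with hg
  have hsum : ∀ (l : Fin d → ℕ), ∑ i, (l i : ℕ) = n →
      ∑ i, ((l i : ℝ) / n - 1 / d) = 0 := by
    intro l hl
    rw [Finset.sum_sub_distrib, ← Finset.sum_div]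
    have : ∑ i : Fin d, (l i : ℝ) = n := by exact_mod_cast hl
    rw [this]
    simp [Finset.card_univ, hn'.ne', hd'.ne']
  have hsf : ∑ i, f i = 0 := hsum lam hs1
  have hsg : ∑ i, g i = 0 := hsum lam' hs2
  have hfa : Antitone f := by
    intro i k hik
    have : (lam k : ℝ) ≤ lam i := by exact_mod_cast h1 hik
    simp only [hf]
    gcongr
  have hga : Antitone g := by
    intro i k hik
    have : (lam' k : ℝ) ≤ lam' i := by exact_mod_cast h2 hik
    simp only [hg]
    gcongr
  have hfg : ∀ j : Fin d, |∑ i ∈ univ.filter (· ≤ j), (f i - g i)| ≤ 1 / n := by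
    intro j
    have : ∑ i ∈ univ.filter (· ≤ j), (f i - g i)
        = (∑ i ∈ univ.filter (· ≤ j), ((lam i : ℝ) - (lam' i : ℝ))) / n := by
      rw [Finset.sum_div]
      refine Finset.sum_congr rfl (fun i _ => ?_)
      simp only [hf, hg]
      field_simp
      ring
    rw [this, abs_div, abs_of_pos hn']
    gcongr
    exact hdiff j
  have hε : (0:ℝ) ≤ 1 / n := by positivity
  have hgf : ∀ j : Fin d, |∑ i ∈ univ.filter (· ≤ j), (g i - f i)| ≤ 1 / n := by
    intro j
    have : ∑ i ∈ univ.filter (· ≤ j), (g i - f i)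
        = -∑ i ∈ univ.filter (· ≤ j), (f i - g i) := by
      rw [← Finset.sum_neg_distrib]; exact Finset.sum_congr rfl (fun i _ => by ring)
    rw [this, abs_neg]; exact hfg j
  have k1 := key_real d f g (1 / n) hε hfa hsf hsg hfg
  have k2 := key_real d g f (1 / n) hε hga hsg hsf hgf
  rw [abs_sub_le_iff]
  constructor <;> [skip; skip] <;>
  · have h14 : 2 * (1 / (n:ℝ)) ≤ 14 / (n:ℝ) := by
      rw [mul_one_div]
      gcongr
      norm_num
    linarith
end

section
/- Let d be a positive integer, let p = (p_1,…,p_d) be a probability distribution over [d], let γ ≥ 0 be defined by Σ_{i=1}^d |p_i − 1/d| = 2γ, and let 0 < α < 1 be a real number. Then Σ_{i=1}^d p_i^α ≤ (1 − α(1−α)·γ²) · d^{1−α}. -/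
/-- If `p` is a distribution over `[d]` at ℓ1 distance `2γ` from uniform and `0 < α < 1`,
then `∑ p_i^α ≤ (1 - α(1-α)γ²)·d^(1-α)`. -/
theorem powerSum_le_of_far_from_uniform (d : ℕ) (hd : 0 < d) (p : Fin d → ℝ)
    (hnn : ∀ i, 0 ≤ p i) (hsum : ∑ i, p i = 1)
    (γ : ℝ) (hγ : 0 ≤ γ) (hγdef : ∑ i, |p i - 1 / d| = 2 * γ)
    (α : ℝ) (hα0 : 0 < α) (hα1 : α < 1) :
    ∑ i, p i ^ α ≤ (1 - α * (1 - α) * γ ^ 2) * (d : ℝ) ^ (1 - α) := by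
  have hd' : (0:ℝ) < d := Nat.cast_pos.mpr hd
  set s : Fin d → ℝ := fun i => Real.sqrt (d * p i) with hs
  have hs_nn : ∀ i, 0 ≤ s i := fun i => Real.sqrt_nonneg _
  have hs_sq : ∀ i, s i ^ 2 = d * p i := fun i =>
    Real.sq_sqrt (mul_nonneg hd'.le (hnn i))
  have hdp : ∑ i, (d:ℝ) * p i = (d:ℝ) := by
    rw [← Finset.mul_sum, hsum, mul_one]
  have hsum_sq : ∑ i, s i ^ 2 = (d:ℝ) := by simp_rw [hs_sq]; exact hdp
  have hone : ∑ _i : Fin d, (1:ℝ) = (d:ℝ) := by simp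
  -- ∑ s i ≤ d
  have hsum_s : ∑ i, s i ≤ (d:ℝ) := by
    have h := Finset.sum_mul_sq_le_sq_mul_sq Finset.univ s (fun _ => (1:ℝ))
    simp only [mul_one, one_pow, Finset.sum_const, Finset.card_univ, Fintype.card_fin,
      nsmul_eq_mul] at h
    rw [hsum_sq] at h
    nlinarith [Finset.sum_nonneg (fun i (_ : i ∈ Finset.univ) => hs_nn i), hd']
  -- ∑ |d p i - 1| = 2 γ d
  have habs : ∑ i, |(d:ℝ) * p i - 1| = 2 * γ * d := by
    have he : ∀ i, |(d:ℝ) * p i - 1| = (d:ℝ) * |p i - 1/d| := by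
      intro i
      have h : (d:ℝ) * p i - 1 = d * (p i - 1/d) := by
        rw [mul_sub, mul_one_div, div_self hd'.ne']
      rw [h, abs_mul, abs_of_pos hd']
    simp_rw [he]
    rw [← Finset.mul_sum, hγdef]
    ring
  -- Cauchy-Schwarz: γ² d ≤ ∑ (s i - 1)²
  have hS : γ^2 * d ≤ ∑ i, (s i - 1)^2 := by
    have hcs := Finset.sum_mul_sq_le_sq_mul_sq Finset.univ
      (fun i => |s i - 1|) (fun i => s i + 1)
    have h1 : ∀ i, |s i - 1| * (s i + 1) = |(d:ℝ) * p i - 1| := by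
      intro i
      rw [← abs_of_nonneg (by linarith [hs_nn i] : (0:ℝ) ≤ s i + 1), ← abs_mul]
      rw [← hs_sq i]
      congr 1
      ring
    simp_rw [h1, sq_abs] at hcs
    rw [habs] at hcs
    have h3 : ∑ i, (s i + 1)^2 ≤ 4 * (d:ℝ) := by
      have e : ∀ i, (s i + 1)^2 = s i ^ 2 + 2 * s i + 1 := fun i => by ring
      simp_rw [e]
      rw [Finset.sum_add_distrib, Finset.sum_add_distrib, ← Finset.mul_sum, hsum_sq, hone]
      linarith
    have hSnn : (0:ℝ) ≤ ∑ i, (s i - 1)^2 :=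
      Finset.sum_nonneg (fun i _ => sq_nonneg _)
    nlinarith [hcs, mul_le_mul_of_nonneg_left h3 hSnn, hd', sq_nonneg γ]
  -- pointwise bound via Young's inequality
  have hpt : ∀ i, ((d:ℝ) * p i) ^ α ≤ 1 + α * ((d:ℝ) * p i - 1) - α*(1-α)*(s i - 1)^2 := by
    intro i
    have hyoung : s i ^ α ≤ α * s i + (1 - α) := by
      have := Real.geom_mean_le_arith_mean2_weighted (w₁ := α) (w₂ := 1 - α)
        (p₁ := s i) (p₂ := 1) hα0.le (by linarith) (hs_nn i) zero_le_one (by ring)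
      simpa using this
    have hrw : ((d:ℝ) * p i) ^ α = (s i ^ α)^2 := by
      rw [← hs_sq i, ← Real.rpow_natCast (s i ^ α) 2, ← Real.rpow_natCast (s i) 2,
        ← Real.rpow_mul (hs_nn i), ← Real.rpow_mul (hs_nn i)]
      ring_nf
    rw [hrw]
    have hnn2 : 0 ≤ s i ^ α := Real.rpow_nonneg (hs_nn i) α
    nlinarith [hs_sq i, hyoung, hnn2]
  -- sum the pointwise bound
  have hsum_dp : ∑ i, ((d:ℝ) * p i) ^ α ≤ (1 - α*(1-α)*γ^2) * d := by
    calc ∑ i, ((d:ℝ) * p i) ^ α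
        ≤ ∑ i, (1 + α * ((d:ℝ) * p i - 1) - α*(1-α)*(s i - 1)^2) :=
          Finset.sum_le_sum (fun i _ => hpt i)
      _ = (d:ℝ) - α*(1-α) * ∑ i, (s i - 1)^2 := by
          simp only [Finset.sum_sub_distrib, Finset.sum_add_distrib, ← Finset.mul_sum,
            hdp, hone]
          ring
      _ ≤ (d:ℝ) - α*(1-α) * (γ^2 * d) := by
          have hc : 0 ≤ α*(1-α) := by nlinarith
          nlinarith [mul_le_mul_of_nonneg_left hS hc]
      _ = (1 - α*(1-α)*γ^2) * d := by ring
  -- relate to ∑ p i ^ α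
  have hmul : ∀ i, ((d:ℝ) * p i) ^ α = (d:ℝ)^α * p i ^ α := fun i =>
    Real.mul_rpow hd'.le (hnn i)
  simp_rw [hmul, ← Finset.mul_sum] at hsum_dp
  have hda : (0:ℝ) < (d:ℝ)^α := Real.rpow_pos_of_pos hd' α
  have hfin : (1 - α * (1 - α) * γ ^ 2) * (d:ℝ) ^ (1-α)
      = ((1 - α * (1 - α) * γ ^ 2) * d) / (d:ℝ)^α := by
    rw [Real.rpow_sub hd', Real.rpow_one]; ring
  rw [hfin, le_div_iff₀ hda]
  calc (∑ i, p i ^ α) * (d:ℝ)^α = (d:ℝ)^α * ∑ i, p i ^ α := mul_comm _ _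
    _ ≤ (1 - α * (1 - α) * γ ^ 2) * d := hsum_dp
end

section
/- Let α and ε be real numbers with 0 < α < 1 and 0 < ε < 1. Then for every real x with 0 ≤ x ≤ 1 − ε, one has x^{1−α}·(x+ε)^α + (1−x)^{1−α}·(1−x−ε)^α < 1 − α(1−α)·ε². -/
lemma amgm (θ a b : ℝ) (hθ0 : 0 < θ) (hθ1 : θ < 1) (ha : 0 ≤ a) (hb : 0 ≤ b) :
    a ^ θ * b ^ (1 - θ) ≤ θ * a + (1 - θ) * b - θ * (1 - θ) * (Real.sqrt a - Real.sqrt b) ^ 2 := by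
  set s := Real.sqrt a with hsdef
  set t := Real.sqrt b with htdef
  have hs0 : 0 ≤ s := Real.sqrt_nonneg a
  have ht0 : 0 ≤ t := Real.sqrt_nonneg b
  have hs : s ^ 2 = a := Real.sq_sqrt ha
  have ht : t ^ 2 = b := Real.sq_sqrt hb
  have hgm : s ^ θ * t ^ (1 - θ) ≤ θ * s + (1 - θ) * t :=
    Real.geom_mean_le_arith_mean2_weighted hθ0.le (by linarith) hs0 ht0 (by ring)
  have hsq : (s ^ θ * t ^ (1 - θ)) ^ 2 ≤ (θ * s + (1 - θ) * t) ^ 2 := by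
    apply pow_le_pow_left₀ (by positivity) hgm
  have e1 : (s ^ θ * t ^ (1 - θ)) ^ 2 = a ^ θ * b ^ (1 - θ) := by
    rw [mul_pow]
    congr 1
    · rw [← hs, ← Real.rpow_natCast s 2, ← Real.rpow_natCast (s ^ θ) 2,
        ← Real.rpow_mul hs0, ← Real.rpow_mul hs0, mul_comm]
    · rw [← ht, ← Real.rpow_natCast t 2, ← Real.rpow_natCast (t ^ (1 - θ)) 2,
        ← Real.rpow_mul ht0, ← Real.rpow_mul ht0, mul_comm]
  nlinarith [hsq, hs, ht]

set_option maxHeartbeats 1000000 in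
lemma key_ineq (ε a b c d : ℝ) (hε0 : 0 < ε) (ha0 : 0 ≤ a) (hc0 : 0 ≤ c)
    (hab : a < b) (hcd : c < d) (hb2 : b ^ 2 = a ^ 2 + ε) (hd2 : d ^ 2 = c ^ 2 + ε)
    (hsum : a ^ 2 + d ^ 2 = 1) : ε ^ 2 < (a - b) ^ 2 + (d - c) ^ 2 := by
  have hb0 : 0 < b := lt_of_le_of_lt ha0 hab
  have hd0 : 0 < d := lt_of_le_of_lt hc0 hcd
  have hApos : 0 < (a + b) ^ 2 := by positivity
  have hBpos : 0 < (c + d) ^ 2 := by positivity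
  have eA : (a - b) ^ 2 * (a + b) ^ 2 = ε ^ 2 := by nlinarith [hb2]
  have eB : (d - c) ^ 2 * (c + d) ^ 2 = ε ^ 2 := by nlinarith [hd2]
  have hu : (0:ℝ) < 4 * a ^ 2 + 2 * ε := by positivity
  have hv : (0:ℝ) < 4 * c ^ 2 + 2 * ε := by positivity
  have hA : (a + b) ^ 2 < 4 * a ^ 2 + 2 * ε := by nlinarith [sq_nonneg (a - b), mul_pos (sub_pos.2 hab) (sub_pos.2 hab)]
  have hB : (c + d) ^ 2 < 4 * c ^ 2 + 2 * ε := by nlinarith [sq_nonneg (d - c), mul_pos (sub_pos.2 hcd) (sub_pos.2 hcd)]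
  have huv : 1 ≤ 1 / (4 * a ^ 2 + 2 * ε) + 1 / (4 * c ^ 2 + 2 * ε) := by
    rw [div_add_div _ _ hu.ne' hv.ne', le_div_iff₀ (by positivity)]
    nlinarith [sq_nonneg (4 * a ^ 2 - 4 * c ^ 2), hsum, hd2]
  have h1A : 1 / (4 * a ^ 2 + 2 * ε) < 1 / (a + b) ^ 2 :=
    one_div_lt_one_div_of_lt hApos hA
  have h1B : 1 / (4 * c ^ 2 + 2 * ε) < 1 / (c + d) ^ 2 :=
    one_div_lt_one_div_of_lt hBpos hB
  have hsumAB : 1 < 1 / (a + b) ^ 2 + 1 / (c + d) ^ 2 := by linarith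
  have eA' : (a - b) ^ 2 = ε ^ 2 * (1 / (a + b) ^ 2) := by
    rw [mul_one_div, eq_div_iff hApos.ne']; exact eA
  have eB' : (d - c) ^ 2 = ε ^ 2 * (1 / (c + d) ^ 2) := by
    rw [mul_one_div, eq_div_iff hBpos.ne']; exact eB
  have h := mul_lt_mul_of_pos_left hsumAB (pow_pos hε0 2)
  rw [eA', eB']
  nlinarith [h]

/-- For `0 < α < 1`, `0 < ε < 1`, and `0 ≤ x ≤ 1 - ε`,
`x^(1-α)(x+ε)^α + (1-x)^(1-α)(1-x-ε)^α < 1 - α(1-α)ε²`. -/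
theorem two_point_bound (α ε : ℝ) (hα0 : 0 < α) (hα1 : α < 1)
    (hε0 : 0 < ε) (hε1 : ε < 1) (x : ℝ) (hx0 : 0 ≤ x) (hx1 : x ≤ 1 - ε) :
    x ^ (1 - α) * (x + ε) ^ α + (1 - x) ^ (1 - α) * (1 - x - ε) ^ α <
      1 - α * (1 - α) * ε ^ 2 := by
  have h1 := amgm (1 - α) x (x + ε) (by linarith) (by linarith) hx0 (by linarith)
  have h2 := amgm (1 - α) (1 - x) (1 - x - ε) (by linarith) (by linarith)
    (by linarith) (by linarith)
  rw [show (1 - (1 - α)) = α by ring] at h1 h2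
  set a := Real.sqrt x with hadef
  set b := Real.sqrt (x + ε) with hbdef
  set c := Real.sqrt (1 - x - ε) with hcdef
  set d := Real.sqrt (1 - x) with hddef
  have ha0 : 0 ≤ a := Real.sqrt_nonneg _
  have hc0 : 0 ≤ c := Real.sqrt_nonneg _
  have ha2 : a ^ 2 = x := Real.sq_sqrt hx0
  have hb2 : b ^ 2 = x + ε := Real.sq_sqrt (by linarith)
  have hc2 : c ^ 2 = 1 - x - ε := Real.sq_sqrt (by linarith)
  have hd2 : d ^ 2 = 1 - x := Real.sq_sqrt (by linarith)
  have hab : a < b := by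
    rw [hadef, hbdef]; exact Real.sqrt_lt_sqrt hx0 (by linarith)
  have hcd : c < d := by
    rw [hcdef, hddef]; exact Real.sqrt_lt_sqrt (by linarith) (by linarith)
  have hS : ε ^ 2 < (a - b) ^ 2 + (d - c) ^ 2 :=
    key_ineq ε a b c d hε0 ha0 hc0 hab hcd (by rw [ha2, hb2]) (by rw [hc2, hd2]; ring)
      (by rw [ha2, hd2]; ring)
  have hαα : 0 < α * (1 - α) := by nlinarith
  have hfin : α * (1 - α) * ε ^ 2 < α * (1 - α) * ((a - b) ^ 2 + (d - c) ^ 2) :=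
    (mul_lt_mul_iff_right₀ hαα).2 hS
  linarith [h1, h2]
end

section
/- Let d ≥ 2 and n ≥ 1 be integers, and let X_1,…,X_n be independent random variables each uniformly distributed over [d] = {1,…,d}. For each i ∈ [d], let N_i = |{k ∈ [n] : X_k = i}| and let p̂_i = N_i/n be the empirical distribution. Then E[ Σ_{i=1}^d |p̂_i − 1/d| ] ≥ min{ 1/2, (8/81)·√(d/n) }. -/
open MeasureTheory ProbabilityTheory

section helpers
variable {Ω : Type*} [MeasurableSpace Ω] {P : Measure Ω} [IsProbabilityMeasure P]

lemma my_integrable_of_abs_le {f : Ω → ℝ} (hf : Measurable f) {C : ℝ} (h : ∀ ω, |f ω| ≤ C) :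
    Integrable f P :=
  (integrable_const C).mono' hf.aestronglyMeasurable
    (Filter.Eventually.of_forall (by simpa [Real.norm_eq_abs] using h))

lemma my_sum_moments {n : ℕ} {Z : Fin n → Ω → ℝ} {v : ℝ}
    (hZm : ∀ k, Measurable (Z k)) (hZb : ∀ k ω, |Z k ω| ≤ 1)
    (hindep : iIndepFun Z P)
    (h0 : ∀ k, ∫ ω, Z k ω ∂P = 0) (h2 : ∀ k, ∫ ω, (Z k ω)^2 ∂P = v)
    (s : Finset (Fin n)) :
    (∫ ω, (∑ k ∈ s, Z k ω) ∂P = 0) ∧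
    (∫ ω, (∑ k ∈ s, Z k ω)^2 ∂P = (s.card : ℝ) * v) ∧
    (∫ ω, (∑ k ∈ s, Z k ω)^4 ∂P ≤ (s.card : ℝ) * v + 3 * ((s.card : ℝ) * v)^2) := by
  classical
  induction s using Finset.induction_on with
  | empty => simp
  | @insert k s hk ih =>
    obtain ⟨ih0, ih2, ih4⟩ := ih
    have hv0 : 0 ≤ v := (h2 k) ▸ integral_nonneg fun ω => sq_nonneg _
    set S : Ω → ℝ := fun ω => ∑ j ∈ s, Z j ω with hS
    set c : ℝ := (s.card : ℝ) with hc
    have hc0 : 0 ≤ c := Nat.cast_nonneg _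
    have hSm : Measurable S := Finset.measurable_sum s (fun j _ => hZm j)
    have hSb : ∀ ω, |S ω| ≤ c := by
      intro ω
      calc |S ω| ≤ ∑ j ∈ s, |Z j ω| := Finset.abs_sum_le_sum_abs _ _
        _ ≤ ∑ _j ∈ s, (1:ℝ) := Finset.sum_le_sum fun j _ => hZb j ω
        _ = c := by simp [hc]
    have hI : IndepFun S (Z k) P := by
      have h := hindep.indepFun_finsetSum_of_notMem hZm hk
      have he : (∑ j ∈ s, Z j) = S := by funext ω; simp [hS]
      rwa [he] at h
    have hSint : ∀ a : ℕ, Integrable (fun ω => (S ω)^a) P := by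
      intro a
      refine my_integrable_of_abs_le (hSm.pow_const a) (C := c^a) fun ω => ?_
      rw [abs_pow]
      exact pow_le_pow_left₀ (abs_nonneg _) (hSb ω) a
    have hZint : ∀ a : ℕ, Integrable (fun ω => (Z k ω)^a) P := by
      intro a
      refine my_integrable_of_abs_le ((hZm k).pow_const a) (C := 1) fun ω => ?_
      rw [abs_pow]
      exact pow_le_one₀ (abs_nonneg _) (hZb k ω)
    have key : ∀ a e : ℕ, ∫ ω, (S ω)^a * (Z k ω)^e ∂P
        = (∫ ω, (S ω)^a ∂P) * (∫ ω, (Z k ω)^e ∂P) := by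
      intro a e
      have hIae : IndepFun (fun ω => (S ω)^a) (fun ω => (Z k ω)^e) P :=
        hI.comp (measurable_id.pow_const a) (measurable_id.pow_const e)
      exact hIae.integral_mul_eq_mul_integral (hSint a).aestronglyMeasurable (hZint e).aestronglyMeasurable
    have hprodint : ∀ a e : ℕ, Integrable (fun ω => (S ω)^a * (Z k ω)^e) P := by
      intro a e
      refine my_integrable_of_abs_le ((hSm.pow_const a).mul ((hZm k).pow_const e))
        (C := c^a * 1) fun ω => ?_
      rw [abs_mul]
      exact mul_le_mul (by rw [abs_pow]; exact pow_le_pow_left₀ (abs_nonneg _) (hSb ω) a)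
        (by rw [abs_pow]; exact pow_le_one₀ (abs_nonneg _) (hZb k ω))
        (abs_nonneg _) (by positivity)
    have hZ4le : ∫ ω, (Z k ω)^4 ∂P ≤ v := by
      rw [← h2 k]
      refine integral_mono (hZint 4) (hZint 2) fun ω => ?_
      have h1 : (Z k ω)^2 ≤ 1 := by
        nlinarith [abs_nonneg (Z k ω), sq_abs (Z k ω), hZb k ω]
      nlinarith [sq_nonneg (Z k ω)]
    have hcard : (((insert k s).card : ℕ) : ℝ) = c + 1 := by
      rw [Finset.card_insert_of_notMem hk]; push_cast [hc]; ring
    have hS1 : Integrable S P := by simpa using hSint 1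
    have hZ1 : Integrable (Z k) P := by simpa using hZint 1
    have hS0 : ∫ ω, S ω ∂P = 0 := ih0
    have hS2 : ∫ ω, (S ω)^2 ∂P = c * v := ih2
    have key11 : ∫ ω, S ω * Z k ω ∂P = 0 := by
      have := key 1 1
      simp only [pow_one] at this
      rw [this, hS0, zero_mul]
    have hprod11 : Integrable (fun ω => S ω * Z k ω) P := by simpa using hprodint 1 1
    -- first moment
    have e1 : ∫ ω, (∑ j ∈ insert k s, Z j ω) ∂P = 0 := by
      have he : (fun ω => ∑ j ∈ insert k s, Z j ω) = fun ω => S ω + Z k ω := by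
        funext ω; rw [Finset.sum_insert hk, add_comm]
      rw [he, integral_add hS1 hZ1, hS0, h0 k, add_zero]
    -- second moment
    have e2 : ∫ ω, (∑ j ∈ insert k s, Z j ω)^2 ∂P = ((insert k s).card : ℝ) * v := by
      have he : (fun ω => (∑ j ∈ insert k s, Z j ω)^2)
          = fun ω => (S ω)^2 + (2*(S ω * Z k ω) + (Z k ω)^2) := by
        funext ω; rw [Finset.sum_insert hk]; ring
      have iA : Integrable (fun ω => 2*(S ω * Z k ω) + (Z k ω)^2) P :=
        (hprod11.const_mul 2).add (hZint 2)
      rw [he, integral_add (hSint 2) iA,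
        integral_add (hprod11.const_mul 2) (hZint 2), integral_const_mul, key11, h2 k,
        hS2, hcard]
      ring
    -- fourth moment
    have e4 : ∫ ω, (∑ j ∈ insert k s, Z j ω)^4 ∂P
        ≤ ((insert k s).card : ℝ) * v + 3 * (((insert k s).card : ℝ) * v)^2 := by
      have he : (fun ω => (∑ j ∈ insert k s, Z j ω)^4)
          = fun ω => (S ω)^4 + (4*((S ω)^3 * Z k ω) + (6*((S ω)^2 * (Z k ω)^2)
              + (4*(S ω * (Z k ω)^3) + (Z k ω)^4))) := by
        funext ω; rw [Finset.sum_insert hk]; ring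
      have h31 : ∫ ω, (S ω)^3 * Z k ω ∂P = (∫ ω, (S ω)^3 ∂P) * 0 := by
        have := key 3 1
        simp only [pow_one] at this
        rw [this, h0 k]
      have h22 : ∫ ω, (S ω)^2 * (Z k ω)^2 ∂P = (c*v) * v := by
        rw [key 2 2, hS2, h2 k]
      have h13 : ∫ ω, S ω * (Z k ω)^3 ∂P = 0 := by
        have := key 1 3
        simp only [pow_one] at this
        rw [this, hS0, zero_mul]
      have i31 : Integrable (fun ω => (S ω)^3 * Z k ω) P := by simpa using hprodint 3 1
      have i22 : Integrable (fun ω => (S ω)^2 * (Z k ω)^2) P := hprodint 2 2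
      have i13 : Integrable (fun ω => S ω * (Z k ω)^3) P := by simpa using hprodint 1 3
      have iC : Integrable (fun ω => 4*(S ω * (Z k ω)^3) + (Z k ω)^4) P :=
        (i13.const_mul 4).add (hZint 4)
      have iB : Integrable (fun ω => 6*((S ω)^2 * (Z k ω)^2) + (4*(S ω * (Z k ω)^3) + (Z k ω)^4)) P :=
        (i22.const_mul 6).add iC
      have iA : Integrable (fun ω => 4*((S ω)^3 * Z k ω) + (6*((S ω)^2 * (Z k ω)^2) + (4*(S ω * (Z k ω)^3) + (Z k ω)^4))) P :=
        (i31.const_mul 4).add iB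
      rw [he, integral_add (hSint 4) iA,
        integral_add (i31.const_mul 4) iB,
        integral_add (i22.const_mul 6) iC,
        integral_add (i13.const_mul 4) (hZint 4),
        integral_const_mul, integral_const_mul, integral_const_mul,
        h31, h22, h13, hcard]
      have := ih4
      nlinarith [sq_nonneg v, hv0, hc0, hZ4le]
    exact ⟨e1, e2, e4⟩

end helpers

lemma my_abs_moment_lb {Ω : Type*} [MeasurableSpace Ω] {P : Measure Ω} [IsProbabilityMeasure P]
    {Y : Ω → ℝ} (hYm : Measurable Y) {C : ℝ} (hYb : ∀ ω, |Y ω| ≤ C)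
    {m : ℝ} (hm0 : 0 ≤ m) (hB : ∫ ω, (Y ω)^2 ∂P = m)
    (hD : ∫ ω, (Y ω)^4 ∂P ≤ m + 3*m^2) :
    (2*m/3)/Real.sqrt (3*(1+3*m)) ≤ ∫ ω, |Y ω| ∂P := by
  set t : ℝ := Real.sqrt (3*(1+3*m)) with hts
  have harg : (0:ℝ) < 3*(1+3*m) := by nlinarith
  have ht0 : 0 < t := Real.sqrt_pos.mpr harg
  have ht2 : t^2 = 3*(1+3*m) := Real.sq_sqrt harg.le
  have hint : ∀ a : ℕ, Integrable (fun ω => (Y ω)^a) P := by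
    intro a
    refine my_integrable_of_abs_le (hYm.pow_const a) (C := C^a) fun ω => ?_
    rw [abs_pow]
    exact pow_le_pow_left₀ (abs_nonneg _) (hYb ω) a
  have hintabs : Integrable (fun ω => |Y ω|) P :=
    my_integrable_of_abs_le hYm.abs (C := C) fun ω => by rw [abs_abs]; exact hYb ω
  have hpt : ∀ ω, (Y ω)^2 ≤ t*|Y ω| + (Y ω)^4/t^2 := by
    intro ω
    set a := |Y ω| with ha
    have ha0 : 0 ≤ a := abs_nonneg _
    have h2 : (Y ω)^2 = a^2 := (sq_abs _).symm
    have h4 : (Y ω)^4 = a^4 := by rw [ha, ← abs_pow, abs_of_nonneg (by positivity)]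
    rw [h2, h4]
    rcases le_total a t with h | h
    · have : a^2 ≤ t*a := by nlinarith
      have : 0 ≤ a^4/t^2 := by positivity
      linarith
    · have ht2' : t^2 ≤ a^2 := pow_le_pow_left₀ ht0.le h 2
      have : a^2 ≤ a^4/t^2 := by
        rw [le_div_iff₀ (by positivity)]
        nlinarith [mul_le_mul_of_nonneg_left ht2' (sq_nonneg a)]
      nlinarith [mul_pos ht0 (lt_of_lt_of_le ht0 h)]
  have hBle : m ≤ t * (∫ ω, |Y ω| ∂P) + (m + 3*m^2)/t^2 := by
    have h1 : m ≤ ∫ ω, (t*|Y ω| + (Y ω)^4/t^2) ∂P := by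
      rw [← hB]
      exact integral_mono (hint 2) ((hintabs.const_mul t).add ((hint 4).div_const _)) hpt
    have h2 : ∫ ω, (t*|Y ω| + (Y ω)^4/t^2) ∂P
        = t * (∫ ω, |Y ω| ∂P) + (∫ ω, (Y ω)^4 ∂P)/t^2 := by
      rw [integral_add (hintabs.const_mul t) ((hint 4).div_const _), integral_const_mul,
        integral_div]
    rw [h2] at h1
    have h3 : (∫ ω, (Y ω)^4 ∂P)/t^2 ≤ (m + 3*m^2)/t^2 :=
      (div_le_div_iff_of_pos_right (by positivity)).mpr hD
    linarith
  have he : (m + 3*m^2)/t^2 = m/3 := by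
    rw [ht2, div_eq_div_iff (by positivity) (by norm_num)]
    ring
  rw [he] at hBle
  rw [div_le_iff₀ ht0, mul_comm]
  linarith

lemma my_final_core (q u : ℝ) (hq : 1/2 ≤ q) (hq1 : q ≤ 1) (hu : 1/4 ≤ u) :
    (8/81)*Real.sqrt (q/u) ≤ (2*q/3)/Real.sqrt (3*(1+3*u)) := by
  have hq0 : (0:ℝ) < q := by linarith
  have hu0 : (0:ℝ) < u := by linarith
  have harg : (0:ℝ) < 3*(1+3*u) := by linarith
  have key : (64/6561)*(q/u) ≤ (2*q/3)^2/(3*(1+3*u)) := by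
    rw [show (64/6561)*(q/u) = (64*q)/(6561*u) by ring, div_le_div_iff₀ (by positivity) harg]
    nlinarith [mul_nonneg (mul_nonneg hq0.le hu0.le) (by linarith : (0:ℝ) ≤ 2*q-1),
      mul_nonneg hq0.le (by linarith : (0:ℝ) ≤ 4*u-1),
      mul_nonneg (mul_nonneg hq0.le hq0.le) hu0.le]
  have h1 : (8/81:ℝ)*Real.sqrt (q/u) = Real.sqrt ((64/6561)*(q/u)) := by
    rw [Real.sqrt_mul (by norm_num : (0:ℝ) ≤ 64/6561),
      show (64/6561:ℝ) = (8/81)^2 by norm_num, Real.sqrt_sq (by norm_num : (0:ℝ) ≤ 8/81)]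
  have h2 : (2*q/3)/Real.sqrt (3*(1+3*u)) = Real.sqrt ((2*q/3)^2/(3*(1+3*u))) := by
    rw [Real.sqrt_div (by positivity), Real.sqrt_sq (by positivity)]
  rw [h1, h2]
  exact Real.sqrt_le_sqrt key

/-- If `X_1,…,X_n` are i.i.d. uniform over `[d]` (`d ≥ 2`) and `p̂` is the empirical
distribution, then `E[∑_i |p̂_i - 1/d|] ≥ min{1/2, (8/81)√(d/n)}`. -/
theorem expected_l1_from_uniform_ge (d n : ℕ) (hd : 2 ≤ d) (hn : 1 ≤ n)
    {Ω : Type*} [MeasurableSpace Ω] (P : Measure Ω) [IsProbabilityMeasure P]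
    (X : Fin n → Ω → Fin d)
    (hmeas : ∀ k, Measurable (X k))
    (hindep : iIndepFun X P)
    (hunif : ∀ k, ∀ i : Fin d, P {ω | X k ω = i} = (d : ENNReal)⁻¹) :
    min (1 / 2 : ℝ) ((8 / 81) * Real.sqrt ((d : ℝ) / n)) ≤
      ∫ ω, ∑ i : Fin d,
        |((Finset.univ.filter fun k => X k ω = i).card : ℝ) / n - 1 / d| ∂P := by
  classical
  have hdr : (2:ℝ) ≤ (d:ℝ) := by exact_mod_cast hd
  have hnr : (1:ℝ) ≤ (n:ℝ) := by exact_mod_cast hn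
  have hd0 : (0:ℝ) < d := by linarith
  have hn0 : (0:ℝ) < n := by linarith
  set p : ℝ := 1/(d:ℝ) with hp
  have hp0 : 0 < p := by positivity
  have hp12 : p ≤ 1/2 := by
    rw [hp, div_le_div_iff₀ hd0 (by norm_num)]
    linarith
  set v : ℝ := p - p^2 with hv
  have hv0 : 0 ≤ v := by nlinarith
  set g : Fin d → Fin d → ℝ := fun i j => (if j = i then (1:ℝ) else 0) - p with hg
  set Z : Fin d → Fin n → Ω → ℝ := fun i k ω => g i (X k ω) with hZ
  set S : Fin d → Ω → ℝ := fun i ω => ∑ k, Z i k ω with hSdef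
  have hZm : ∀ i k, Measurable (Z i k) := fun i k =>
    (measurable_of_countable (g i)).comp (hmeas k)
  have hZb : ∀ i k ω, |Z i k ω| ≤ 1 := by
    intro i k ω
    simp only [hZ, hg]
    split_ifs <;> rw [abs_le] <;> constructor <;> nlinarith
  have hindZ : ∀ i : Fin d, iIndepFun (Z i) P := fun i =>
    hindep.comp (fun _ => g i) (fun _ => measurable_of_countable _)
  -- integral of the indicator
  have hind_int : ∀ (k : Fin n) (i : Fin d),
      ∫ ω, (if X k ω = i then (1:ℝ) else 0) ∂P = p := by
    intro k i
    have hs : MeasurableSet {ω | X k ω = i} := hmeas k (MeasurableSet.singleton i)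
    have he : (fun ω => (if X k ω = i then (1:ℝ) else 0))
        = Set.indicator {ω | X k ω = i} (fun _ => (1:ℝ)) := by
      funext ω
      by_cases h : X k ω = i <;> simp [Set.indicator_apply, Set.mem_setOf_eq, h]
    rw [he, integral_indicator_const (1:ℝ) hs, measureReal_def, hunif k i, smul_eq_mul, mul_one, hp,
      ENNReal.toReal_inv]
    simp
  have hint_ind : ∀ (k : Fin n) (i : Fin d),
      Integrable (fun ω => (if X k ω = i then (1:ℝ) else 0)) P := by
    intro k i
    refine my_integrable_of_abs_le ((measurable_of_countable
      (fun j : Fin d => if j = i then (1:ℝ) else 0)).comp (hmeas k)) (C := 1) fun ω => ?_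
    by_cases h : X k ω = i <;> simp [h]
  have h0 : ∀ (i : Fin d) (k : Fin n), ∫ ω, Z i k ω ∂P = 0 := by
    intro i k
    have he : (fun ω => Z i k ω)
        = fun ω => (if X k ω = i then (1:ℝ) else 0) - p := by
      funext ω; simp [hZ, hg]
    rw [he, integral_sub (hint_ind k i) (integrable_const p), hind_int k i,
      integral_const, smul_eq_mul]
    simp
  have h2 : ∀ (i : Fin d) (k : Fin n), ∫ ω, (Z i k ω)^2 ∂P = v := by
    intro i k
    have he : (fun ω => (Z i k ω)^2)
        = fun ω => (1-2*p) * (if X k ω = i then (1:ℝ) else 0) + p^2 := by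
      funext ω
      simp only [hZ, hg]
      by_cases h : X k ω = i <;> simp [h] <;> ring
    rw [he, integral_add ((hint_ind k i).const_mul _) (integrable_const _),
      integral_const_mul, hind_int k i, integral_const, smul_eq_mul]
    have : P.real Set.univ = 1 := by simp
    rw [this, one_mul, hv]
    ring
  -- moments of the sums
  have hmom := fun i : Fin d =>
    my_sum_moments (hZm i) (hZb i) (hindZ i) (h0 i) (h2 i) Finset.univ
  have hcardn : ((Finset.univ : Finset (Fin n)).card : ℝ) = (n:ℝ) := by
    simp
  set m : ℝ := (n:ℝ) * v with hm
  have hm0 : 0 ≤ m := by positivity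
  have hSm : ∀ i, Measurable (S i) := fun i =>
    Finset.measurable_sum _ (fun k _ => hZm i k)
  have hSb : ∀ i ω, |S i ω| ≤ (n:ℝ) := by
    intro i ω
    calc |S i ω| ≤ ∑ k, |Z i k ω| := Finset.abs_sum_le_sum_abs _ _
      _ ≤ ∑ _k : Fin n, (1:ℝ) := Finset.sum_le_sum fun k _ => hZb i k ω
      _ = (n:ℝ) := by simp
  -- lower bound on each absolute first moment
  have hA : ∀ i : Fin d, (2*m/3)/Real.sqrt (3*(1+3*m)) ≤ ∫ ω, |S i ω| ∂P := by
    intro i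
    obtain ⟨-, hB, hD⟩ := hmom i
    rw [hcardn] at hB hD
    rw [← hm] at hB hD
    exact my_abs_moment_lb (hSm i) (hSb i) hm0 hB hD
  -- rewrite the integrand
  have hFS : ∀ ω, (∑ i : Fin d,
      |((Finset.univ.filter fun k => X k ω = i).card : ℝ) / n - 1 / d|)
      = ∑ i : Fin d, |S i ω| / n := by
    intro ω
    refine Finset.sum_congr rfl fun i _ => ?_
    have hc : ((Finset.univ.filter fun k => X k ω = i).card : ℝ)
        = ∑ k : Fin n, (if X k ω = i then (1:ℝ) else 0) := by
      rw [Finset.card_filter]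
      push_cast
      rfl
    have hSi : S i ω = ((Finset.univ.filter fun k => X k ω = i).card : ℝ) - n * p := by
      rw [hc, hSdef]
      simp only [hZ, hg]
      rw [Finset.sum_sub_distrib, Finset.sum_const, Finset.card_univ, Fintype.card_fin,
        nsmul_eq_mul]
    have heq : ((Finset.univ.filter fun k => X k ω = i).card : ℝ) / n - 1 / d
        = S i ω / n := by
      rw [hSi, hp, sub_div, mul_div_cancel_left₀ _ hn0.ne']
    rw [heq, abs_div, abs_of_nonneg hn0.le]
  have hintabsS : ∀ i : Fin d, Integrable (fun ω => |S i ω|) P := fun i =>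
    my_integrable_of_abs_le (hSm i).abs (C := (n:ℝ)) fun ω => by
      rw [abs_abs]; exact hSb i ω
  have hswap : ∫ ω, (∑ i : Fin d, |S i ω| / n) ∂P = ∑ i : Fin d, (∫ ω, |S i ω| ∂P) / n := by
    rw [integral_finset_sum _ (fun i _ => (hintabsS i).div_const _)]
    exact Finset.sum_congr rfl fun i _ => integral_div _ _
  have hgoal_eq : (∫ ω, ∑ i : Fin d,
      |((Finset.univ.filter fun k => X k ω = i).card : ℝ) / n - 1 / d| ∂P)
      = ∑ i : Fin d, (∫ ω, |S i ω| ∂P) / n := by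
    rw [← hswap]
    exact integral_congr_ae (Filter.Eventually.of_forall hFS)
  rw [hgoal_eq]
  have hv0' : (0:ℝ) < v := by nlinarith
  have hm0' : (0:ℝ) < m := by rw [hm]; positivity
  by_cases hcase : d ≤ 2 * n
  · -- statistical case
    refine le_trans (min_le_right _ _) ?_
    have hucase : (d:ℝ) ≤ 2 * n := by exact_mod_cast hcase
    set q : ℝ := 1 - p with hqdef
    have hvq : v = p * q := by rw [hv, hqdef]; ring
    have hq12 : 1/2 ≤ q := by rw [hqdef]; linarith
    have hq1 : q ≤ 1 := by rw [hqdef]; linarith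
    have hdp : (d:ℝ) * p = 1 := by rw [hp]; field_simp
    have hquv : q/m = (d:ℝ)/n := by
      rw [div_eq_div_iff hm0'.ne' hn0.ne', hm, hvq]
      calc q * (n:ℝ) = ((d:ℝ)*p) * (q * n) := by rw [hdp]; ring
        _ = (d:ℝ) * ((n:ℝ) * (p * q)) := by ring
    have hmu : 1/4 ≤ m := by
      have h1 : (1/2 : ℝ) * (1/2) ≤ ((n:ℝ)/d) * q := by
        apply mul_le_mul
        · rw [le_div_iff₀ hd0]; linarith
        · linarith
        · norm_num
        · positivity
      have hmq : m = ((n:ℝ)/d) * q := by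
        rw [hm, hvq]
        calc (n:ℝ) * (p * q) = ((d:ℝ)*p) * (((n:ℝ)/d) * q) := by field_simp
          _ = ((n:ℝ)/d) * q := by rw [hdp]; ring
      rw [hmq]; linarith
    have hkey := my_final_core q m hq12 hq1 hmu
    rw [← hquv]
    refine le_trans hkey ?_
    set T : ℝ := Real.sqrt (3*(1+3*m)) with hT
    have hT0 : 0 < T := Real.sqrt_pos.mpr (by nlinarith)
    have hsum : ∑ i : Fin d, ((2*m/3)/T) / n
        ≤ ∑ i : Fin d, (∫ ω, |S i ω| ∂P) / n :=
      Finset.sum_le_sum fun i _ => (div_le_div_iff_of_pos_right hn0).mpr (hA i)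
    refine le_trans ?_ hsum
    rw [Finset.sum_const, Finset.card_univ, Fintype.card_fin, nsmul_eq_mul]
    have hqm : (d:ℝ) * (2*m/3) = 2*q/3 * n := by
      rw [hm, hvq]
      calc (d:ℝ) * (2*((n:ℝ)*(p*q))/3) = ((d:ℝ)*p) * (2*q/3*n) := by ring
        _ = 2*q/3 * n := by rw [hdp]; ring
    -- goal : (2*q/3)/T ≤ d * ((2*m/3)/T/n)
    have : (d:ℝ) * ((2*m/3)/T/n) = (2*q/3)/T := by
      calc (d:ℝ) * ((2*m/3)/T/n) = ((d:ℝ)*(2*m/3)) * (1/n) * (1/T) := by ring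
        _ = (2*q/3*n) * (1/n) * (1/T) := by rw [hqm]
        _ = (2*q/3) * ((n:ℝ)*(1/n)) * (1/T) := by ring
        _ = (2*q/3) * 1 * (1/T) := by rw [mul_one_div_cancel hn0.ne']
        _ = (2*q/3)/T := by ring
    rw [this]
  · -- deterministic case : d > 2n
    push_neg at hcase
    have hcr : 2 * (n:ℝ) ≤ (d:ℝ) := by exact_mod_cast hcase.le
    refine le_trans (min_le_left _ _) ?_
    have hpt : ∀ ω, (1/2 : ℝ) ≤ ∑ i : Fin d, |S i ω| / n := by
      intro ω
      have := hFS ω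
      rw [← this]
      set B : Finset (Fin d) := Finset.univ.image (fun k => X k ω) with hB
      have hBcard : (B.card : ℝ) ≤ (n:ℝ) := by
        have : B.card ≤ (Finset.univ : Finset (Fin n)).card := Finset.card_image_le
        have h2 : B.card ≤ n := by simpa using this
        exact_mod_cast h2
      have hstep : ∑ _i ∈ ((Finset.univ : Finset (Fin d)) \ B), (1/(d:ℝ))
          ≤ ∑ i : Fin d,
            |((Finset.univ.filter fun k => X k ω = i).card : ℝ) / n - 1 / d| := by
        have hsub : ∑ i ∈ ((Finset.univ : Finset (Fin d)) \ B),
              |((Finset.univ.filter fun k => X k ω = i).card : ℝ) / n - 1 / d|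
            ≤ ∑ i : Fin d,
              |((Finset.univ.filter fun k => X k ω = i).card : ℝ) / n - 1 / d| :=
          Finset.sum_le_sum_of_subset_of_nonneg (Finset.sdiff_subset)
            (fun i _ _ => abs_nonneg _)
        refine le_trans (le_of_eq ?_) hsub
        refine Finset.sum_congr rfl fun i hi => ?_
        have hiB : i ∉ B := (Finset.mem_sdiff.mp hi).2
        have hfilter : (Finset.univ.filter fun k => X k ω = i) = ∅ := by
          rw [Finset.filter_eq_empty_iff]
          intro k _
          intro hcontra
          exact hiB (Finset.mem_image.mpr ⟨k, Finset.mem_univ k, hcontra⟩)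
        rw [hfilter]
        simp only [Finset.card_empty, Nat.cast_zero, zero_div, zero_sub, abs_neg]
        rw [abs_of_nonneg (by positivity)]
      have hBd : B.card ≤ d := by
        have h1 := Finset.card_le_univ B
        simpa using h1
      have hcard : (((Finset.univ : Finset (Fin d)) \ B).card : ℝ) = (d:ℝ) - B.card := by
        rw [Finset.card_sdiff_of_subset (Finset.subset_univ B), Nat.cast_sub (by simpa using hBd)]
        simp
      have hsumval : ∑ _i ∈ ((Finset.univ : Finset (Fin d)) \ B), (1/(d:ℝ))
          = ((d:ℝ) - B.card) / d := by
        rw [Finset.sum_const, nsmul_eq_mul, hcard, mul_one_div]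
      have hhalf : (1/2 : ℝ) ≤ ((d:ℝ) - B.card) / d := by
        rw [le_div_iff₀ hd0]
        linarith
      calc (1/2 : ℝ) ≤ ((d:ℝ) - B.card) / d := hhalf
        _ = ∑ _i ∈ ((Finset.univ : Finset (Fin d)) \ B), (1/(d:ℝ)) := hsumval.symm
        _ ≤ ∑ i : Fin d,
            |((Finset.univ.filter fun k => X k ω = i).card : ℝ) / n - 1 / d| := hstep
    rw [← hswap]
    have hintsum : Integrable (fun ω => ∑ i : Fin d, |S i ω|/n) P :=
      integrable_finset_sum _ (fun i _ => (hintabsS i).div_const _)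
    calc (1/2 : ℝ) = ∫ _ω, (1/2 : ℝ) ∂P := by rw [integral_const]; simp
      _ ≤ ∫ ω, ∑ i : Fin d, |S i ω|/n ∂P :=
        integral_mono (integrable_const _) hintsum hpt
end
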